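/- arXiv:1607.06705 — 5 statements merged into one kernel-verified Lean document; each statement's English description precedes it below -/
import Mathlib

section
/- Let R be an integral domain and let J ⊆ I be nonzero ideals of R. Then J is a t-reduction of I if and only if J is a t-reduction of I_t, if and only if J_t is a t-reduction of I_t. -/
open scoped nonZeroDivisors

/-- The `v`-operation (divisorial closure) on `R`-submodules of the fraction field `K`:
`I_v = (I⁻¹)⁻¹` where `I⁻¹ = (R : I) = 1 / I`. -/
noncomputable def vS (R K : Type*) [CommRing R] [Field K] [Algebra R K]
    (I : Submodule R K) : Submodule R K := 1 / (1 / I)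

/-- The `t`-operation: `I_t = ⋃ J_v` where `J` ranges over nonzero finitely generated
sub-ideals of `I`. -/
noncomputable def tS (R K : Type*) [CommRing R] [Field K] [Algebra R K]
    (I : Submodule R K) : Submodule R K :=
  ⨆ J ∈ {J : Submodule R K | J ≠ ⊥ ∧ J.FG ∧ J ≤ I}, vS R K J

/-- The image of an ideal of `R` in the fraction field `K`, as an `R`-submodule. -/
noncomputable def idealToSub (R K : Type*) [CommRing R] [Field K] [Algebra R K]
    (I : Ideal R) : Submodule R K := Submodule.map (Algebra.linearMap R K) I

/-- The `t`-closure of an ideal of `R`, computed in the fraction field `K`. -/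
noncomputable def tI (R K : Type*) [CommRing R] [Field K] [Algebra R K]
    (I : Ideal R) : Submodule R K := tS R K (idealToSub R K I)

/-- The `v`-closure of an ideal of `R`, computed in the fraction field `K`. -/
noncomputable def vI (R K : Type*) [CommRing R] [Field K] [Algebra R K]
    (I : Ideal R) : Submodule R K := vS R K (idealToSub R K I)

/-- `J` is a `t`-reduction of the `R`-submodule `I` of `K`:
`(J · I^n)_t = (I^(n+1))_t` for some `n ≥ 0`. -/
noncomputable def IsTRedS (R K : Type*) [CommRing R] [Field K] [Algebra R K]
    (J I : Submodule R K) : Prop :=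
  ∃ n : ℕ, tS R K (J * I ^ n) = tS R K (I ^ (n + 1))

section Aux

variable {R K : Type*} [CommRing R] [Field K] [Algebra R K]


lemma one_div_antitone' {I J : Submodule R K} (h : I ≤ J) :
    (1 / J : Submodule R K) ≤ 1 / I := fun x hx => by
  rw [Submodule.mem_div_iff_forall_mul_mem] at hx ⊢
  exact fun y hy => hx y (h hy)

lemma le_vS (I : Submodule R K) : I ≤ vS R K I := by
  intro x hx
  rw [vS, Submodule.mem_div_iff_forall_mul_mem]
  intro y hy
  rw [Submodule.mem_div_iff_forall_mul_mem] at hy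
  rw [mul_comm]
  exact hy x hx

lemma vS_mono' {I J : Submodule R K} (h : I ≤ J) : vS R K I ≤ vS R K J :=
  one_div_antitone' (one_div_antitone' h)

lemma vS_vS (I : Submodule R K) : vS R K (vS R K I) = vS R K I := by
  refine le_antisymm ?_ (le_vS _)
  simp only [vS]
  exact one_div_antitone' (le_vS (1 / I))

lemma mul_vS_le' (A B : Submodule R K) : A * vS R K B ≤ vS R K (A * B) := by
  rw [Submodule.mul_le]
  intro a ha u hu
  rw [vS, Submodule.mem_div_iff_forall_mul_mem]
  intro z hz
  rw [Submodule.mem_div_iff_forall_mul_mem] at hz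
  simp only [vS] at hu
  have hza : z * a ∈ (1 / B : Submodule R K) := by
    rw [Submodule.mem_div_iff_forall_mul_mem]
    intro b hb
    have h1 : a * b ∈ A * B := Submodule.mul_mem_mul ha hb
    have h2 := hz _ h1
    rwa [← mul_assoc] at h2
  have h3 := Submodule.mem_div_iff_forall_mul_mem.mp hu _ hza
  have h4 : a * u * z = u * (z * a) := by ring
  rwa [h4]

lemma vS_le_tS {I J : Submodule R K} (hne : J ≠ ⊥) (hfg : J.FG) (hle : J ≤ I) :
    vS R K J ≤ tS R K I :=
  le_iSup₂_of_le J ⟨hne, hfg, hle⟩ le_rfl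

lemma le_tS (I : Submodule R K) : I ≤ tS R K I := by
  intro x hx
  rcases eq_or_ne x 0 with rfl | hx0
  · exact Submodule.zero_mem _
  · have hne : Submodule.span R {x} ≠ ⊥ := by
      simpa [Submodule.span_singleton_eq_bot] using hx0
    have := vS_le_tS hne (Submodule.fg_span_singleton x)
      (Submodule.span_le.mpr (Set.singleton_subset_iff.mpr hx))
    exact this (le_vS _ (Submodule.mem_span_singleton_self x))

lemma tS_mono' {I J : Submodule R K} (h : I ≤ J) : tS R K I ≤ tS R K J :=
  iSup₂_le fun L hL => vS_le_tS hL.1 hL.2.1 (hL.2.2.trans h)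

lemma tS_tS (I : Submodule R K) : tS R K (tS R K I) = tS R K I := by
  refine le_antisymm (iSup₂_le fun J hJ => ?_) (le_tS _)
  obtain ⟨hJne, hJfg, hJle⟩ := hJ
  set s : Set (Submodule R K) :=
    (fun L => vS R K L) '' {L : Submodule R K | L ≠ ⊥ ∧ L.FG ∧ L ≤ I} with hs
  have htseq : tS R K I = sSup s := by
    rw [hs, sSup_image, tS]
  rcases Set.eq_empty_or_nonempty {L : Submodule R K | L ≠ ⊥ ∧ L.FG ∧ L ≤ I} with hemp | hne
  · exfalso
    apply hJne
    have : tS R K I = ⊥ := by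
      rw [htseq, hs, hemp]
      simp
    rw [this, le_bot_iff] at hJle
    exact hJle
  · have hdir : DirectedOn (· ≤ ·) s := by
      rintro _ ⟨L1, hL1, rfl⟩ _ ⟨L2, hL2, rfl⟩
      refine ⟨vS R K (L1 ⊔ L2), ⟨L1 ⊔ L2, ⟨?_, hL1.2.1.sup hL2.2.1, sup_le hL1.2.2 hL2.2.2⟩, rfl⟩,
        vS_mono' le_sup_left, vS_mono' le_sup_right⟩
      intro h
      exact hL1.1 (by simpa using le_sup_left.trans_eq h : L1 = ⊥)
    have hcomp := (Submodule.fg_iff_compact J).mp hJfg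
    rw [CompleteLattice.isCompactElement_iff_le_of_directed_sSup_le] at hcomp
    obtain ⟨x, hxs, hJx⟩ := hcomp s (hne.image _) hdir (htseq ▸ hJle)
    obtain ⟨L, hL, rfl⟩ := hxs
    calc vS R K J ≤ vS R K (vS R K L) := vS_mono' hJx
      _ = vS R K L := vS_vS L
      _ ≤ tS R K I := vS_le_tS hL.1 hL.2.1 hL.2.2

lemma mul_tS_le' (A B : Submodule R K) : A * tS R K B ≤ tS R K (A * B) := by
  rw [Submodule.mul_le]
  intro a ha x hx
  rcases eq_or_ne a 0 with rfl | ha0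
  · simpa using Submodule.zero_mem (tS R K (A * B))
  have key : tS R K B ≤ Submodule.comap (LinearMap.mulLeft R a) (tS R K (A * B)) := by
    refine iSup₂_le fun J hJ => ?_
    intro y hy
    simp only [Submodule.mem_comap, LinearMap.mulLeft_apply]
    have h1 : a * y ∈ Submodule.span R {a} * vS R K J :=
      Submodule.mul_mem_mul (Submodule.mem_span_singleton_self a) hy
    have h2 := mul_vS_le' (Submodule.span R {a}) J h1
    obtain ⟨j, hjJ, hj0⟩ := Submodule.exists_mem_ne_zero_of_ne_bot hJ.1
    have hne : Submodule.span R {a} * J ≠ ⊥ := by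
      rw [Submodule.ne_bot_iff]
      exact ⟨a * j, Submodule.mul_mem_mul (Submodule.mem_span_singleton_self a) hjJ,
        mul_ne_zero ha0 hj0⟩
    have hfg : (Submodule.span R {a} * J).FG := (Submodule.fg_span_singleton a).mul hJ.2.1
    have hle : Submodule.span R {a} * J ≤ A * B :=
      mul_le_mul' (Submodule.span_le.mpr (Set.singleton_subset_iff.mpr ha)) hJ.2.2
    exact vS_le_tS hne hfg hle h2
  exact key hx

lemma tS_mul_tS (A B : Submodule R K) : tS R K (A * tS R K B) = tS R K (A * B) := by
  refine le_antisymm ((tS_mono' (mul_tS_le' A B)).trans (tS_tS (A * B)).le) ?_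
  exact tS_mono' (mul_le_mul' le_rfl (le_tS B))

lemma tS_mul_pow' (B : Submodule R K) (m : ℕ) (A : Submodule R K) :
    tS R K (A * (tS R K B) ^ m) = tS R K (A * B ^ m) := by
  induction m generalizing A with
  | zero => simp
  | succ m ih =>
    calc tS R K (A * (tS R K B) ^ (m + 1))
        = tS R K ((A * (tS R K B) ^ m) * tS R K B) := by rw [pow_succ, mul_assoc]
      _ = tS R K ((A * (tS R K B) ^ m) * B) := tS_mul_tS _ _
      _ = tS R K ((A * B) * (tS R K B) ^ m) := by rw [mul_right_comm]
      _ = tS R K ((A * B) * B ^ m) := ih (A * B)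
      _ = tS R K (A * B ^ (m + 1)) := by rw [mul_assoc, ← pow_succ']

end Aux



section Main

variable {R K : Type*} [CommRing R] [Field K] [Algebra R K]

lemma isTRedS_tS_right (J I : Submodule R K) :
    IsTRedS R K J I ↔ IsTRedS R K J (tS R K I) := by
  unfold IsTRedS
  have h1 : ∀ n : ℕ, tS R K (J * (tS R K I) ^ n) = tS R K (J * I ^ n) :=
    fun n => tS_mul_pow' I n J
  have h2 : ∀ n : ℕ, tS R K ((tS R K I) ^ (n + 1)) = tS R K (I ^ (n + 1)) := by
    intro n
    have := tS_mul_pow' I (n + 1) (1 : Submodule R K)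
    simpa using this
  exact ⟨fun ⟨n, h⟩ => ⟨n, by rw [h1, h2]; exact h⟩,
    fun ⟨n, h⟩ => ⟨n, by rw [h1, h2] at h; exact h⟩⟩

lemma isTRedS_tS_left (J I : Submodule R K) :
    IsTRedS R K J I ↔ IsTRedS R K (tS R K J) I := by
  unfold IsTRedS
  have h1 : ∀ n : ℕ, tS R K (tS R K J * I ^ n) = tS R K (J * I ^ n) := fun n => by
    rw [mul_comm, tS_mul_tS, mul_comm]
  exact ⟨fun ⟨n, h⟩ => ⟨n, by rw [h1]; exact h⟩, fun ⟨n, h⟩ => ⟨n, by rw [h1] at h; exact h⟩⟩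

end Main

/-- For nonzero ideals `J ⊆ I` of a domain `R`: `J` is a `t`-reduction of `I` iff `J` is a
`t`-reduction of `I_t`, iff `J_t` is a `t`-reduction of `I_t`. -/
theorem t_reduction_iff_t_reduction_of_t_closure (R K : Type*) [CommRing R] [IsDomain R]
    [Field K] [Algebra R K] [IsFractionRing R K]
    (J I : Ideal R) (hJ0 : J ≠ 0) (hI0 : I ≠ 0) (hJI : J ≤ I) :
    (IsTRedS R K (idealToSub R K J) (idealToSub R K I) ↔
      IsTRedS R K (idealToSub R K J) (tI R K I)) ∧
    (IsTRedS R K (idealToSub R K J) (tI R K I) ↔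
      IsTRedS R K (tI R K J) (tI R K I)) := by
  refine ⟨isTRedS_tS_right _ _, isTRedS_tS_left _ _⟩
end

section
/- Let R be an integral domain, ★ a star operation on R, and K ⊆ J ⊆ I nonzero fractional ideals of R. If K is a ★-reduction of J and J is a ★-reduction of I, then K is a ★-reduction of I. -/
set_option linter.unusedSectionVars false


open scoped nonZeroDivisors

/-- A star operation on a domain `R` with fraction field `K`: a map on (nonzero) fractional
ideals satisfying `(xR)^★ = xR`, `(xI)^★ = x I^★`, `I ⊆ I^★`, monotonicity, and idempotency. -/
structure StarOperation (R K : Type*) [CommRing R] [IsDomain R] [Field K] [Algebra R K]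
    [IsFractionRing R K] where
  star : FractionalIdeal R⁰ K → FractionalIdeal R⁰ K
  star_spanSingleton : ∀ x : K, x ≠ 0 →
    star (FractionalIdeal.spanSingleton R⁰ x) = FractionalIdeal.spanSingleton R⁰ x
  star_spanSingleton_mul : ∀ (x : K) (I : FractionalIdeal R⁰ K), x ≠ 0 → I ≠ 0 →
    star (FractionalIdeal.spanSingleton R⁰ x * I) = FractionalIdeal.spanSingleton R⁰ x * star I
  le_star : ∀ I : FractionalIdeal R⁰ K, I ≠ 0 → I ≤ star I
  star_mono : ∀ I J : FractionalIdeal R⁰ K, I ≠ 0 → I ≤ J → star I ≤ star J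
  star_star : ∀ I : FractionalIdeal R⁰ K, I ≠ 0 → star (star I) = star I

/-- `J` is a `★`-reduction of `I` if `(J · I^n)^★ = (I^(n+1))^★` for some integer `n ≥ 0`. -/
def IsStarReduction {R K : Type*} [CommRing R] [IsDomain R] [Field K] [Algebra R K]
    [IsFractionRing R K] (s : StarOperation R K) (J I : FractionalIdeal R⁰ K) : Prop :=
  ∃ n : ℕ, s.star (J * I ^ n) = s.star (I ^ (n + 1))


section Aux
variable {R K : Type*} [CommRing R] [IsDomain R] [Field K] [Algebra R K] [IsFractionRing R K]

lemma FI.exists_ne_zero {I : FractionalIdeal R⁰ K} (hI : I ≠ 0) : ∃ x ∈ I, x ≠ (0 : K) := by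
  by_contra h
  push_neg at h
  exact hI (FractionalIdeal.eq_zero_iff.mpr h)

lemma FI.mul_ne_zero' {I J : FractionalIdeal R⁰ K} (hI : I ≠ 0) (hJ : J ≠ 0) : I * J ≠ 0 := by
  obtain ⟨x, hxI, hx⟩ := FI.exists_ne_zero hI
  obtain ⟨y, hyJ, hy⟩ := FI.exists_ne_zero hJ
  intro h
  exact mul_ne_zero hx hy
    (FractionalIdeal.eq_zero_iff.mp h _ (FractionalIdeal.mul_mem_mul hxI hyJ))

lemma FI.pow_ne_zero' {I : FractionalIdeal R⁰ K} (hI : I ≠ 0) : ∀ k : ℕ, I ^ k ≠ 0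
  | 0 => by simp
  | (k + 1) => by rw [pow_succ]; exact FI.mul_ne_zero' (FI.pow_ne_zero' hI k) hI

lemma FI.pow_le_pow {I J : FractionalIdeal R⁰ K} (h : I ≤ J) : ∀ k : ℕ, I ^ k ≤ J ^ k
  | 0 => by simp
  | (k + 1) => by
      rw [pow_succ, pow_succ]
      exact le_trans (mul_le_mul' (FI.pow_le_pow h k) le_rfl)
        (mul_le_mul' le_rfl h)

variable (s : StarOperation R K)

lemma StarOperation.star_ne_zero {I : FractionalIdeal R⁰ K} (hI : I ≠ 0) : s.star I ≠ 0 := by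
  intro h
  exact hI (le_antisymm (h ▸ s.le_star I hI) (FractionalIdeal.zero_le I))

lemma StarOperation.mul_star (A B : FractionalIdeal R⁰ K) (hA : A ≠ 0) (hB : B ≠ 0) :
    s.star (A * s.star B) = s.star (A * B) := by
  refine le_antisymm ?_ (s.star_mono _ _ (FI.mul_ne_zero' hA hB)
    (mul_le_mul' le_rfl (s.le_star B hB)))
  have h1 : A * s.star B ≤ s.star (A * B) := by
    rw [FractionalIdeal.mul_le]
    intro a ha b hb
    rcases eq_or_ne a 0 with rfl | ha0
    · simpa using (s.star (A * B)).zero_mem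
    have h2 : FractionalIdeal.spanSingleton R⁰ a * s.star B ≤ s.star (A * B) := by
      rw [← s.star_spanSingleton_mul a B ha0 hB]
      exact s.star_mono _ _
        (FI.mul_ne_zero' (FractionalIdeal.spanSingleton_ne_zero_iff.mpr ha0) hB)
        (mul_le_mul'
          ((FractionalIdeal.spanSingleton_le_iff_mem).mpr ha) le_rfl)
    exact h2 (FractionalIdeal.mul_mem_mul
      ((FractionalIdeal.mem_spanSingleton_self _ _)) hb)
  have := s.star_mono _ _ (FI.mul_ne_zero' hA (s.star_ne_zero hB)) h1
  rwa [s.star_star _ (FI.mul_ne_zero' hA hB)] at this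

lemma StarOperation.star_mul (A B : FractionalIdeal R⁰ K) (hA : A ≠ 0) (hB : B ≠ 0) :
    s.star (s.star A * B) = s.star (A * B) := by
  rw [mul_comm, s.mul_star B A hB hA, mul_comm]

end Aux

/-- Transitivity of `★`-reduction: if `K₀` is a `★`-reduction of `J` and `J` is a
`★`-reduction of `I`, then `K₀` is a `★`-reduction of `I`. -/
theorem starReduction_trans (R K : Type*) [CommRing R] [IsDomain R] [Field K] [Algebra R K]
    [IsFractionRing R K] (s : StarOperation R K) (K₀ J I : FractionalIdeal R⁰ K)
    (hK0 : K₀ ≠ 0) (hJ0 : J ≠ 0) (hI0 : I ≠ 0) (hKJ : K₀ ≤ J) (hJI : J ≤ I)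
    (h1 : IsStarReduction s K₀ J) (h2 : IsStarReduction s J I) :
    IsStarReduction s K₀ I := by
  obtain ⟨n, hn⟩ := h1
  obtain ⟨m, hm⟩ := h2
  have hIp : ∀ k : ℕ, I ^ k ≠ 0 := FI.pow_ne_zero' hI0
  have hJp : ∀ k : ℕ, J ^ k ≠ 0 := FI.pow_ne_zero' hJ0
  have key : ∀ k : ℕ, s.star (J ^ (k + 1) * I ^ m) = s.star (I ^ (m + k + 1)) := by
    intro k
    induction k with
    | zero => simpa using hm
    | succ k ih =>
      have e1 : J ^ (k + 1 + 1) * I ^ m = J * (J ^ (k + 1) * I ^ m) := by ring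
      rw [e1, ← s.mul_star J _ hJ0 (FI.mul_ne_zero' (hJp _) (hIp _)), ih,
        s.mul_star J _ hJ0 (hIp _)]
      have e2 : J * I ^ (m + k + 1) = (J * I ^ m) * I ^ (k + 1) := by ring
      rw [e2, ← s.star_mul (J * I ^ m) _ (FI.mul_ne_zero' hJ0 (hIp _)) (hIp _), hm,
        s.star_mul _ _ (hIp _) (hIp _)]
      congr 1
      ring
  refine ⟨n + m, le_antisymm ?_ ?_⟩
  · refine s.star_mono _ _ (FI.mul_ne_zero' hK0 (hIp _)) ?_
    calc K₀ * I ^ (n + m) ≤ I * I ^ (n + m) :=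
          mul_le_mul' (hKJ.trans hJI) le_rfl
      _ = I ^ (n + m + 1) := by ring
  · have e3 : (m + n + 1 : ℕ) = n + m + 1 := by omega
    rw [← e3, ← key n, ← s.star_mul (J ^ (n + 1)) _ (hJp _) (hIp _), ← hn,
      s.star_mul _ _ (FI.mul_ne_zero' hK0 (hJp _)) (hIp _)]
    refine s.star_mono _ _ (FI.mul_ne_zero' (FI.mul_ne_zero' hK0 (hJp _)) (hIp _)) ?_
    calc K₀ * J ^ n * I ^ m ≤ K₀ * I ^ n * I ^ m :=
          mul_le_mul'
            (mul_le_mul' le_rfl (FI.pow_le_pow hJI n)) le_rfl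
      _ = K₀ * I ^ (n + m) := by ring
end

section
/- Let R be an integral domain, ★ a star operation on R, and J ⊆ I nonzero fractional ideals of R. Then J is a ★-reduction of I if and only if J^n is a ★-reduction of I^n, for any fixed positive integer n. -/
open scoped nonZeroDivisors

section Aux

variable {R K : Type*} [CommRing R] [IsDomain R] [Field K] [Algebra R K] [IsFractionRing R K]

lemma aux_mul_ne_zero {A B : FractionalIdeal R⁰ K} (hA : A ≠ 0) (hB : B ≠ 0) : A * B ≠ 0 := by
  rw [Ne, FractionalIdeal.eq_zero_iff] at hA hB ⊢
  push_neg at hA hB ⊢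
  obtain ⟨a, ha, ha0⟩ := hA
  obtain ⟨b, hb, hb0⟩ := hB
  exact ⟨a * b, FractionalIdeal.mul_mem_mul ha hb, mul_ne_zero ha0 hb0⟩

lemma aux_pow_ne_zero {A : FractionalIdeal R⁰ K} (hA : A ≠ 0) (n : ℕ) : A ^ n ≠ 0 := by
  induction n with
  | zero => simp
  | succ k ih => rw [pow_succ]; exact aux_mul_ne_zero ih hA

lemma aux_pow_le_pow {A B : FractionalIdeal R⁰ K} (h : A ≤ B) (k : ℕ) : A ^ k ≤ B ^ k := by
  induction k with
  | zero => simp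
  | succ t ih =>
    rw [pow_succ, pow_succ]
    exact le_trans (mul_le_mul_left ih A) (mul_le_mul_right h _)

lemma aux_star_ne_zero (s : StarOperation R K) {A : FractionalIdeal R⁰ K} (hA : A ≠ 0) :
    s.star A ≠ 0 := by
  intro h
  exact hA (le_antisymm (h ▸ s.le_star A hA) bot_le)

/-- `(A^★ B)^★ = (AB)^★`. -/
lemma auxStarStarMul (s : StarOperation R K) {A B : FractionalIdeal R⁰ K}
    (hA : A ≠ 0) (hB : B ≠ 0) : s.star (s.star A * B) = s.star (A * B) := by
  apply le_antisymm
  · have hle : s.star A * B ≤ s.star (A * B) := by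
      refine FractionalIdeal.mul_le.2 fun i hi j hj => ?_
      by_cases hj0 : j = 0
      · simpa [hj0] using (s.star (A * B)).zero_mem
      have hji : j * i ∈ FractionalIdeal.spanSingleton R⁰ j * s.star A :=
        FractionalIdeal.mul_mem_mul (FractionalIdeal.mem_spanSingleton_self R⁰ j) hi
      have hspan0 : FractionalIdeal.spanSingleton R⁰ j ≠ 0 := by
        simpa [Ne, FractionalIdeal.spanSingleton_eq_zero_iff] using hj0
      rw [← s.star_spanSingleton_mul j A hj0 hA] at hji
      have h1 : FractionalIdeal.spanSingleton R⁰ j * A ≤ A * B :=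
        le_of_le_of_eq
          (mul_le_mul_left (FractionalIdeal.spanSingleton_le_iff_mem.2 hj) A)
          (mul_comm B A)
      have := s.star_mono _ _ (aux_mul_ne_zero hspan0 hA) h1 hji
      simpa [mul_comm] using this
    have := s.star_mono _ _ (aux_mul_ne_zero (aux_star_ne_zero s hA) hB) hle
    rwa [s.star_star _ (aux_mul_ne_zero hA hB)] at this
  · exact s.star_mono _ _ (aux_mul_ne_zero hA hB)
      (mul_le_mul_left (s.le_star A hA) B)

end Aux

/-- For nonzero fractional ideals `J ⊆ I` and any positive integer `n`:
`J` is a `★`-reduction of `I` iff `J^n` is a `★`-reduction of `I^n`. -/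
theorem starReduction_pow_iff (R K : Type*) [CommRing R] [IsDomain R] [Field K] [Algebra R K]
    [IsFractionRing R K] (s : StarOperation R K) (J I : FractionalIdeal R⁰ K)
    (hJ0 : J ≠ 0) (hI0 : I ≠ 0) (hJI : J ≤ I) (n : ℕ) (hn : 0 < n) :
    IsStarReduction s J I ↔ IsStarReduction s (J ^ n) (I ^ n) := by
  constructor
  · rintro ⟨m, hm⟩
    -- claim: ∀ t, s.star (J^t * I^(m*t)) = s.star (I^((m+1)*t))
    have claim : ∀ t : ℕ, s.star (J ^ t * I ^ (m * t)) = s.star (I ^ ((m + 1) * t)) := by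
      intro t
      induction t with
      | zero => simp
      | succ k ih =>
        have e1 : J ^ (k + 1) * I ^ (m * (k + 1)) =
            (J * I ^ m) * (J ^ k * I ^ (m * k)) := by ring
        have hJIm : J * I ^ m ≠ 0 := aux_mul_ne_zero hJ0 (aux_pow_ne_zero hI0 m)
        have hJk : J ^ k * I ^ (m * k) ≠ 0 :=
          aux_mul_ne_zero (aux_pow_ne_zero hJ0 k) (aux_pow_ne_zero hI0 (m * k))
        calc s.star (J ^ (k + 1) * I ^ (m * (k + 1)))
            = s.star ((J * I ^ m) * (J ^ k * I ^ (m * k))) := by rw [e1]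
          _ = s.star (s.star (J * I ^ m) * (J ^ k * I ^ (m * k))) :=
              (auxStarStarMul s hJIm hJk).symm
          _ = s.star (s.star (I ^ (m + 1)) * (J ^ k * I ^ (m * k))) := by rw [hm]
          _ = s.star (I ^ (m + 1) * (J ^ k * I ^ (m * k))) :=
              auxStarStarMul s (aux_pow_ne_zero hI0 (m + 1)) hJk
          _ = s.star ((J ^ k * I ^ (m * k)) * I ^ (m + 1)) := by rw [mul_comm]
          _ = s.star (s.star (J ^ k * I ^ (m * k)) * I ^ (m + 1)) :=
              (auxStarStarMul s hJk (aux_pow_ne_zero hI0 (m + 1))).symm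
          _ = s.star (s.star (I ^ ((m + 1) * k)) * I ^ (m + 1)) := by rw [ih]
          _ = s.star (I ^ ((m + 1) * k) * I ^ (m + 1)) :=
              auxStarStarMul s (aux_pow_ne_zero hI0 _) (aux_pow_ne_zero hI0 _)
          _ = s.star (I ^ ((m + 1) * (k + 1))) := by rw [← pow_add]; ring_nf
    refine ⟨m, ?_⟩
    have := claim n
    have e2 : J ^ n * (I ^ n) ^ m = J ^ n * I ^ (m * n) := by rw [← pow_mul]; ring_nf
    have e3 : (I ^ n) ^ (m + 1) = I ^ ((m + 1) * n) := by rw [← pow_mul]; ring_nf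
    rw [e2, e3, this]
  · rintro ⟨k, hk⟩
    have hnpos : 1 ≤ n := hn
    -- set m := n * (k + 1) - 1
    obtain ⟨m, hm⟩ : ∃ m : ℕ, n * (k + 1) = m + 1 :=
      ⟨n * (k + 1) - 1, (Nat.succ_pred_eq_of_pos (by positivity)).symm⟩
    refine ⟨m, ?_⟩
    have hsub : J ^ n * (I ^ n) ^ k ≤ J * I ^ m := by
      have e0 : J ^ n = J * J ^ (n - 1) := by
        rw [← pow_succ']; congr 1; omega
      have e1 : J ^ n * (I ^ n) ^ k = J * (J ^ (n - 1) * I ^ (n * k)) := by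
        rw [← pow_mul, e0, mul_assoc]
      rw [e1]
      refine mul_le_mul_right ?_ J
      have h1 : J ^ (n - 1) * I ^ (n * k) ≤ I ^ (n - 1) * I ^ (n * k) :=
        mul_le_mul_left (aux_pow_le_pow hJI (n - 1)) _
      have hm' : n + n * k = m + 1 := by rw [← hm]; ring
      have h2 : I ^ (n - 1) * I ^ (n * k) = I ^ m := by
        rw [← pow_add]; congr 1; omega
      rw [h2] at h1; exact h1
    have hup : J * I ^ m ≤ I ^ (m + 1) := by
      calc J * I ^ m ≤ I * I ^ m := mul_le_mul_left hJI _
        _ = I ^ (m + 1) := by rw [← pow_succ']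
    have hk' : s.star (I ^ (m + 1)) = s.star (J ^ n * (I ^ n) ^ k) := by
      rw [hk, ← pow_mul, ← hm]
    apply le_antisymm
    · exact s.star_mono _ _ (aux_mul_ne_zero hJ0 (aux_pow_ne_zero hI0 m)) hup
    · rw [hk']
      exact s.star_mono _ _
        (aux_mul_ne_zero (aux_pow_ne_zero hJ0 n) (aux_pow_ne_zero (aux_pow_ne_zero hI0 n) k))
        hsub
end

section
/- Let R be an integrally closed domain, I a nonzero finitely generated ideal of R, and J a reduction of I. Then I ⊆ J_t, and hence J_t = I_t; that is, every nonzero finitely generated ideal of an integrally closed domain is t-basic with respect to ordinary reductions. -/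
open scoped nonZeroDivisors

open scoped Pointwise

section Aux

variable {R K : Type*} [CommRing R] [Field K] [Algebra R K]

lemma aux_div_antitone {X Y : Submodule R K} (h : X ≤ Y) :
    (1 : Submodule R K) / Y ≤ 1 / X := by
  intro z hz
  rw [Submodule.mem_div_iff_forall_mul_mem] at hz ⊢
  exact fun y hy => hz y (h hy)

lemma aux_le_vS (X : Submodule R K) : X ≤ vS R K X := by
  intro x hx
  rw [vS, Submodule.mem_div_iff_forall_mul_mem]
  intro y hy
  rw [Submodule.mem_div_iff_forall_mul_mem] at hy
  simpa [mul_comm] using hy x hx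

lemma aux_vS_mono {X Y : Submodule R K} (h : X ≤ Y) : vS R K X ≤ vS R K Y :=
  aux_div_antitone (aux_div_antitone h)

lemma aux_vS_vS (X : Submodule R K) : vS R K (vS R K X) = vS R K X := by
  refine le_antisymm ?_ (aux_le_vS _)
  have h1 : (1 : Submodule R K) / X ≤ 1 / (1 / (1 / X)) := aux_le_vS _
  exact aux_div_antitone h1

/-- If `N` is finitely generated and `N ≤ J * M`, there is a finitely generated
`J' ≤ J` with `N ≤ J' * M`. -/
lemma aux_exists_fg_sub (J M : Ideal R) {N : Ideal R} (hN : N.FG) (h : N ≤ J * M) :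
    ∃ J' : Ideal R, J'.FG ∧ J' ≤ J ∧ N ≤ J' * M := by
  classical
  obtain ⟨s, rfl⟩ := hN
  induction s using Finset.induction_on with
  | empty => exact ⟨⊥, Submodule.fg_bot, bot_le, by simp⟩
  | @insert a s ha ih =>
      have hs : Ideal.span (s : Set R) ≤ J * M :=
        le_trans (Ideal.span_mono (by simp [Finset.coe_insert])) h
      obtain ⟨J₀, hJ₀fg, hJ₀J, hJ₀⟩ := ih hs
      have haJ : a ∈ J * M := h (Ideal.subset_span (by simp))
      obtain ⟨T, T', hT, hT', haT⟩ := Submodule.mem_span_mul_finite_of_mem_mul haJ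
      refine ⟨Ideal.span (T : Set R) ⊔ J₀, (Submodule.fg_span T.finite_toSet).sup hJ₀fg,
        sup_le ((Ideal.span_le).mpr hT) hJ₀J, ?_⟩
      rw [Finset.coe_insert, Ideal.span_insert, Submodule.sup_mul]
      refine sup_le ?_ (le_trans hJ₀ le_sup_right)
      refine le_trans ?_ le_sup_left
      have hsub : Submodule.span R ((T : Set R) * (T' : Set R)) ≤ Ideal.span (T : Set R) * M := by
        rw [← Submodule.span_mul_span]
        exact mul_le_mul' le_rfl (Submodule.span_le.mpr hT')
      exact (Ideal.span_singleton_le_iff_mem _).mpr (hsub haT)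

lemma aux_idealToSub_mul (I₁ I₂ : Ideal R) :
    idealToSub R K (I₁ * I₂) = idealToSub R K I₁ * idealToSub R K I₂ := by
  have : Algebra.linearMap R K = (Algebra.ofId R K).toLinearMap := rfl
  simp only [idealToSub, this]
  exact Submodule.map_mul _ _ (Algebra.ofId R K)

lemma aux_idealToSub_mono {I₁ I₂ : Ideal R} (h : I₁ ≤ I₂) :
    idealToSub R K I₁ ≤ idealToSub R K I₂ := Submodule.map_mono h

end Aux

/-- In an integrally closed domain, if `J` is a reduction of a nonzero finitely generated
ideal `I`, then `I ⊆ J_t` and hence `J_t = I_t`: every nonzero finitely generated ideal is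
`t`-basic with respect to ordinary reductions. -/
theorem t_basic_of_integrallyClosed (R K : Type*) [CommRing R] [IsDomain R]
    [IsIntegrallyClosed R] [Field K] [Algebra R K] [IsFractionRing R K]
    (I J : Ideal R) (hI0 : I ≠ 0) (hIfg : I.FG) (hJI : J ≤ I)
    (hred : ∃ n : ℕ, J * I ^ n = I ^ (n + 1)) :
    idealToSub R K I ≤ tI R K J ∧ tI R K J = tI R K I := by
  obtain ⟨n, hn⟩ := hred
  have hinj : Function.Injective (algebraMap R K) := IsFractionRing.injective R K
  -- find a finitely generated reduction J' ≤ J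
  obtain ⟨J', hJ'fg, hJ'J, hJ'⟩ :=
    aux_exists_fg_sub J (I ^ n) ((Submodule.FG.pow hIfg (n + 1))) (le_of_eq hn.symm)
  -- pick a nonzero element of I
  obtain ⟨a, haI, ha0⟩ : ∃ a ∈ I, a ≠ 0 := by
    by_contra hcon
    push_neg at hcon
    exact hI0 (le_antisymm (fun x hx => hcon x hx) bot_le)
  have hJ'0 : J' ≠ ⊥ := by
    rintro rfl
    have h1 : a ^ (n + 1) ∈ (⊥ : Ideal R) * I ^ n := hJ' (Ideal.pow_mem_pow haI (n + 1))
    have h2 : (⊥ : Ideal R) * I ^ n = ⊥ := by simp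
    rw [h2] at h1
    exact pow_ne_zero (n + 1) ha0 (by simpa using h1)
  set B : Submodule R K := idealToSub R K J' with hB
  set N : Submodule R K := idealToSub R K (I ^ n) with hNdef
  have hNfg : N.FG := Submodule.FG.map _ (Submodule.FG.pow hIfg n)
  have hN0 : N ≠ ⊥ := by
    intro hbot
    have : algebraMap R K (a ^ n) = 0 := by
      have : algebraMap R K (a ^ n) ∈ N :=
        ⟨a ^ n, Ideal.pow_mem_pow haI n, rfl⟩
      rw [hbot] at this; simpa using this
    exact pow_ne_zero n ha0 (hinj (by simpa using this))
  -- key claim: I_K ≤ vS B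
  have key : idealToSub R K I ≤ vS R K B := by
    rintro _ ⟨x, hxI, rfl⟩
    rw [vS, Submodule.mem_div_iff_forall_mul_mem]
    intro u hu
    rw [Submodule.mem_div_iff_forall_mul_mem] at hu
    -- show (algebraMap x) * u is integral over R
    have hsmul : ∀ m ∈ N, (Algebra.linearMap R K x * u) • m ∈ N := by
      rintro _ ⟨y, hyN, rfl⟩
      have hxy : x * y ∈ J' * I ^ n := hJ' (by
        have := Ideal.mul_mem_mul hxI hyN
        rwa [← pow_succ'] at this)
      have hmem : algebraMap R K (x * y) ∈ B * N := by
        rw [hB, hNdef, ← aux_idealToSub_mul]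
        exact ⟨x * y, hxy, rfl⟩
      have : ∀ w ∈ B * N, u * w ∈ N := by
        intro w hw
        refine Submodule.mul_induction_on hw ?_ ?_
        · intro b hb m hm
          obtain ⟨r, hr⟩ := (Submodule.mem_one).mp (hu b hb)
          have heq2 : u * (b * m) = r • m := by
            rw [Algebra.smul_def, hr]
            ring
          rw [heq2]
          exact N.smul_mem r hm
        · intro w₁ w₂ h₁ h₂
          rw [mul_add]
          exact N.add_mem h₁ h₂
      have := this _ hmem
      have heq : (Algebra.linearMap R K x * u) • (Algebra.linearMap R K) y
          = u * algebraMap R K (x * y) := by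
        simp only [smul_eq_mul, map_mul, Algebra.linearMap_apply]
        ring
      rw [heq]
      exact this
    have hint : IsIntegral R (Algebra.linearMap R K x * u) :=
      isIntegral_of_smul_mem_submodule N hN0 hNfg _ hsmul
    obtain ⟨r, hr⟩ := IsIntegrallyClosed.isIntegral_iff.mp hint
    exact (Submodule.mem_one).mpr ⟨r, hr⟩
  have hBmem : B ∈ {X : Submodule R K | X ≠ ⊥ ∧ X.FG ∧ X ≤ idealToSub R K J} := by
    refine ⟨?_, Submodule.FG.map _ hJ'fg, aux_idealToSub_mono hJ'J⟩
    intro hbot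
    obtain ⟨b, hbJ', hb0⟩ : ∃ b ∈ J', b ≠ 0 := by
      by_contra hcon
      push_neg at hcon
      exact hJ'0 (le_antisymm (fun x hx => hcon x hx) bot_le)
    have : algebraMap R K b = 0 := by
      have : algebraMap R K b ∈ B := ⟨b, hbJ', rfl⟩
      rw [hbot] at this; simpa using this
    exact hb0 (hinj (by simpa using this))
  have hvB_le : vS R K B ≤ tI R K J := by
    rw [tI, tS]
    exact le_iSup₂_of_le B hBmem le_rfl
  have part1 : idealToSub R K I ≤ tI R K J := le_trans key hvB_le
  refine ⟨part1, ?_⟩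
  apply le_antisymm
  · -- tI J ≤ tI I
    rw [tI, tS]
    refine iSup₂_le fun X hX => ?_
    rw [tI, tS]
    exact le_iSup₂_of_le X ⟨hX.1, hX.2.1, le_trans hX.2.2 (aux_idealToSub_mono hJI)⟩ le_rfl
  · -- tI I ≤ tI J
    rw [tI, tS]
    refine iSup₂_le fun X hX => ?_
    have hXv : vS R K X ≤ vS R K B := by
      have : X ≤ vS R K B := le_trans hX.2.2 key
      calc vS R K X ≤ vS R K (vS R K B) := aux_vS_mono this
        _ = vS R K B := aux_vS_vS B
    exact le_trans hXv hvB_le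
end

section
/- Let R be a pseudo-valuation domain issued from (V, M, k) with K := V/M, and suppose that for every k-vector subspace W of K containing k, some power W^n is a field. Then for all nonzero ideals J ⊆ I of R, J is a t-reduction of I if and only if J is a reduction of I. -/
open scoped nonZeroDivisors

set_option linter.unusedSectionVars false
set_option linter.unusedVariables false
set_option maxHeartbeats 1000000
open Submodule Pointwise

section Generic
open Submodule Pointwise
variable {R0 K0 : Type*} [CommRing R0] [Field K0] [Algebra R0 K0]

lemma mem_div1 {S : Submodule R0 K0} {x : K0} :
    x ∈ (1 : Submodule R0 K0) / S ↔ ∀ y ∈ S, x * y ∈ (1 : Submodule R0 K0) :=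
  Submodule.mem_div_iff_forall_mul_mem

lemma le_vS_s14 (S : Submodule R0 K0) : S ≤ vS R0 K0 S := by
  intro x hx
  rw [vS, mem_div1]
  intro y hy
  rw [mul_comm]
  exact mem_div1.1 hy x hx

lemma div1_antitone {S S' : Submodule R0 K0} (h : S ≤ S') :
    (1 : Submodule R0 K0) / S' ≤ 1 / S := by
  intro z hz
  rw [mem_div1] at hz ⊢
  exact fun y hy => hz y (h hy)

lemma vS_mono {S S' : Submodule R0 K0} (h : S ≤ S') : vS R0 K0 S ≤ vS R0 K0 S' :=
  div1_antitone (div1_antitone h)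

lemma tS_le {S X : Submodule R0 K0}
    (h : ∀ J : Submodule R0 K0, J ≠ ⊥ → J.FG → J ≤ S → vS R0 K0 J ≤ X) :
    tS R0 K0 S ≤ X :=
  iSup₂_le fun J hJ => h J hJ.1 hJ.2.1 hJ.2.2

lemma vS_le_tS_s14 {J S : Submodule R0 K0} (h1 : J ≠ ⊥) (h2 : J.FG) (h3 : J ≤ S) :
    vS R0 K0 J ≤ tS R0 K0 S :=
  le_iSup₂_of_le J ⟨h1, h2, h3⟩ le_rfl

lemma le_tS_s14 (S : Submodule R0 K0) : S ≤ tS R0 K0 S := by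
  intro x hx
  by_cases hx0 : x = 0
  · simp [hx0]
  · refine vS_le_tS_s14 (J := span R0 {x}) ?_ (fg_span_singleton x) ?_ (le_vS_s14 _ (mem_span_singleton_self x))
    · simpa [Submodule.span_singleton_eq_bot]
    · simpa [Submodule.span_le]

lemma tS_le_vS (S : Submodule R0 K0) : tS R0 K0 S ≤ vS R0 K0 S :=
  tS_le fun _ _ _ h => vS_mono h

lemma vS_span_singleton {d : K0} (hd : d ≠ 0) :
    vS R0 K0 (span R0 {d}) = span R0 {d} := by
  refine le_antisymm ?_ (le_vS_s14 _)
  intro x hx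
  rw [vS, mem_div1] at hx
  have hdinv : d⁻¹ ∈ (1 : Submodule R0 K0) / span R0 {d} := by
    rw [mem_div1]
    intro y hy
    obtain ⟨r, rfl⟩ := mem_span_singleton.1 hy
    rw [Algebra.smul_def, mul_comm, mul_assoc, mul_inv_cancel₀ hd, mul_one]
    exact Submodule.mem_one.2 ⟨r, rfl⟩
  obtain ⟨r, hr⟩ := Submodule.mem_one.1 (hx d⁻¹ hdinv)
  have hx' : x = algebraMap R0 K0 r * d := by
    rw [hr, mul_assoc, inv_mul_cancel₀ hd, mul_one]
  rw [hx', ← Algebra.smul_def]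
  exact smul_mem _ _ (mem_span_singleton_self d)

lemma span_cancel {d : K0} (hd : d ≠ 0) (S : Submodule R0 K0) :
    span R0 {d⁻¹} * (span R0 {d} * S) = S := by
  rw [← mul_assoc, Submodule.span_mul_span, Set.singleton_mul_singleton,
    inv_mul_cancel₀ hd, Submodule.one_eq_span.symm, one_mul]

lemma span_cancel' {d : K0} (hd : d ≠ 0) (S : Submodule R0 K0) :
    span R0 {d} * (span R0 {d⁻¹} * S) = S := by
  rw [← mul_assoc, Submodule.span_mul_span, Set.singleton_mul_singleton,
    mul_inv_cancel₀ hd, Submodule.one_eq_span.symm, one_mul]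

lemma div1_span_mul {d : K0} (hd : d ≠ 0) (S : Submodule R0 K0) :
    (1 : Submodule R0 K0) / (span R0 {d} * S) = span R0 {d⁻¹} * ((1 : Submodule R0 K0) / S) := by
  ext z
  rw [mem_div1, Submodule.mem_span_singleton_mul]
  constructor
  · intro h
    refine ⟨z * d, ?_, by field_simp⟩
    rw [mem_div1]
    intro s hs
    have := h (d * s) (mul_mem_mul (mem_span_singleton_self d) hs)
    rwa [← mul_assoc] at this
  · rintro ⟨w, hw, rfl⟩
    intro y hy
    rw [Submodule.mem_span_singleton_mul] at hy
    obtain ⟨s, hs, rfl⟩ := hy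
    have : d⁻¹ * w * (d * s) = w * s := by field_simp
    rw [this]
    exact mem_div1.1 hw s hs

lemma vS_span_mul {d : K0} (hd : d ≠ 0) (S : Submodule R0 K0) :
    vS R0 K0 (span R0 {d} * S) = span R0 {d} * vS R0 K0 S := by
  rw [vS, div1_span_mul hd, div1_span_mul (inv_ne_zero hd), inv_inv, vS]

lemma span_mul_ne_bot {d : K0} (hd : d ≠ 0) {S : Submodule R0 K0} (hS : S ≠ ⊥) :
    span R0 {d} * S ≠ ⊥ := by
  obtain ⟨x, hx, hx0⟩ := Submodule.exists_mem_ne_zero_of_ne_bot hS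
  intro h
  have : d * x ∈ (⊥ : Submodule R0 K0) := h ▸ mul_mem_mul (mem_span_singleton_self d) hx
  rw [Submodule.mem_bot] at this
  exact hx0 (by simpa [hd] using (mul_eq_zero.1 this))

lemma tS_span_mul {d : K0} (hd : d ≠ 0) (S : Submodule R0 K0) :
    tS R0 K0 (span R0 {d} * S) = span R0 {d} * tS R0 K0 S := by
  refine le_antisymm ?_ ?_
  · refine tS_le fun J hJb hJfg hJle => ?_
    have hJ' : J = span R0 {d} * (span R0 {d⁻¹} * J) := (span_cancel' hd J).symm
    rw [hJ', vS_span_mul hd]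
    refine mul_le_mul' le_rfl (vS_le_tS_s14 ?_ ?_ ?_)
    · exact span_mul_ne_bot (inv_ne_zero hd) hJb
    · exact Submodule.FG.mul (fg_span_singleton _) hJfg
    · have := mul_le_mul' (le_refl (span R0 {d⁻¹})) hJle
      rwa [span_cancel hd] at this
  · have h2 : tS R0 K0 S ≤ span R0 {d⁻¹} * tS R0 K0 (span R0 {d} * S) := by
      refine tS_le fun J hJb hJfg hJle => ?_
      have : vS R0 K0 J = span R0 {d⁻¹} * vS R0 K0 (span R0 {d} * J) := by
        rw [vS_span_mul hd, span_cancel hd]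
      rw [this]
      refine mul_le_mul' le_rfl (vS_le_tS_s14 ?_ ?_ ?_)
      · exact span_mul_ne_bot hd hJb
      · exact Submodule.FG.mul (fg_span_singleton _) hJfg
      · exact mul_le_mul' le_rfl hJle
    have := mul_le_mul' (le_refl (span R0 {d})) h2
    rwa [span_cancel' hd] at this

lemma tS_span_singleton {d : K0} (hd : d ≠ 0) :
    tS R0 K0 (span R0 {d}) = span R0 {d} :=
  le_antisymm (le_trans (tS_le_vS _) (vS_span_singleton hd).le) (le_tS_s14 _)

lemma span_singleton_mul_span (d e : K0) :
    span R0 {d} * span R0 {e} = span R0 {d * e} := by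
  rw [Submodule.span_mul_span, Set.singleton_mul_singleton]

lemma span_eq_cancel {d : K0} (hd : d ≠ 0) {S S' : Submodule R0 K0}
    (h : span R0 {d} * S = span R0 {d} * S') : S = S' := by
  have := congrArg (fun X => span R0 {d⁻¹} * X) h
  simpa [span_cancel hd] using this

end Generic


section Setting
variable {V : Type*} [CommRing V] [IsDomain V] [ValuationRing V]
variable {k : Subfield (IsLocalRing.ResidueField V)} {R : Subring V}
variable {Q : Type*} [Field Q] [Algebra ↥R Q]

lemma res_zero_iff (v : V) : IsLocalRing.residue V v = 0 ↔ ¬ IsUnit v := by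
  rw [show (IsLocalRing.residue V v = 0) ↔ v ∈ RingHom.ker (IsLocalRing.residue V) from Iff.rfl,
    IsLocalRing.ker_residue]
  rfl

/-- image submodule constructor -/
def fSub (f : V →+* Q) (hf : ∀ r : ↥R, f ↑r = algebraMap ↥R Q r) (s : Set V)
    (h0 : (0:V) ∈ s) (hadd : ∀ ⦃a⦄, a ∈ s → ∀ ⦃b⦄, b ∈ s → a + b ∈ s)
    (hsmul : ∀ (r : ↥R) ⦃a⦄, a ∈ s → (r:V) * a ∈ s) : Submodule ↥R Q where
  carrier := f '' s
  zero_mem' := ⟨0, h0, map_zero f⟩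
  add_mem' := by rintro _ _ ⟨a, ha, rfl⟩ ⟨b, hb, rfl⟩; exact ⟨a+b, hadd ha hb, map_add f a b⟩
  smul_mem' := by
    rintro r _ ⟨a, ha, rfl⟩
    exact ⟨(r:V)*a, hsmul r ha, by rw [map_mul, hf, Algebra.smul_def]⟩

lemma mem_fSub {f : V →+* Q} {hf : ∀ r : ↥R, f ↑r = algebraMap ↥R Q r} {s h0 hadd hsmul} {x : Q} :
    x ∈ fSub f hf s h0 hadd hsmul ↔ ∃ v ∈ s, f v = x := Iff.rfl

variable (f : V →+* Q)

/-- the image of V in Q -/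
def Vq (hf : ∀ r : ↥R, f ↑r = algebraMap ↥R Q r) : Submodule ↥R Q :=
  fSub f hf Set.univ trivial (fun _ _ _ _ => trivial) (fun _ _ _ => trivial)

/-- the image of the maximal ideal of V in Q -/
def Mq (hf : ∀ r : ↥R, f ↑r = algebraMap ↥R Q r) : Submodule ↥R Q :=
  fSub f hf (IsLocalRing.maximalIdeal V : Set V) (zero_mem _)
    (fun _ ha _ hb => add_mem ha hb)
    (fun r _ ha => Ideal.mul_mem_left _ _ ha)

variable {f}
variable (hf : ∀ r : ↥R, f ↑r = algebraMap ↥R Q r) (hfi : Function.Injective f)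
variable (hRk : ∀ v : V, v ∈ R ↔ IsLocalRing.residue V v ∈ k)

lemma mem_Vq (x : Q) : x ∈ Vq f hf ↔ ∃ v, f v = x := by
  constructor
  · intro h; obtain ⟨v, _, hv⟩ := mem_fSub.1 h; exact ⟨v, hv⟩
  · rintro ⟨v, hv⟩; exact mem_fSub.2 ⟨v, trivial, hv⟩

lemma f_mem_Vq (v : V) : f v ∈ Vq f hf := (mem_Vq hf _).2 ⟨v, rfl⟩

lemma mem_Mq (x : Q) : x ∈ Mq f hf ↔ ∃ v, ¬IsUnit v ∧ f v = x := by
  simp only [Mq, mem_fSub]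
  constructor
  · rintro ⟨v, hv, rfl⟩; exact ⟨v, hv, rfl⟩
  · rintro ⟨v, hv, rfl⟩; exact ⟨v, hv, rfl⟩

include hf hfi in
lemma f_mem_one {v : V} : f v ∈ (1 : Submodule ↥R Q) ↔ v ∈ R := by
  rw [Submodule.mem_one]
  constructor
  · rintro ⟨r, hr⟩
    have : f ↑r = f v := by rw [hf]; exact hr
    rw [← hfi this]; exact r.2
  · intro h; exact ⟨⟨v, h⟩, (hf ⟨v, h⟩).symm⟩

include hRk in
lemma nonunit_mem_R {v : V} (h : ¬ IsUnit v) : v ∈ R := by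
  rw [hRk, (res_zero_iff v).2 h]
  exact zero_mem _

include hf hRk in
lemma Mq_le_one : Mq f hf ≤ (1 : Submodule ↥R Q) := by
  rintro x hx
  obtain ⟨v, hv, rfl⟩ := (mem_Mq hf x).1 hx
  exact Submodule.mem_one.2 ⟨⟨v, nonunit_mem_R hRk hv⟩, (hf _).symm⟩

include hf in
lemma one_le_Vq : (1 : Submodule ↥R Q) ≤ Vq f hf := by
  intro x hx
  obtain ⟨r, hr⟩ := Submodule.mem_one.1 hx
  exact (mem_Vq hf x).2 ⟨↑r, by rw [hf]; exact hr⟩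

include hf in
lemma one_mem_Vq : (1:Q) ∈ Vq f hf := (mem_Vq hf _).2 ⟨1, map_one f⟩

include hf in
lemma Vq_mul_Vq : Vq f hf * Vq f hf = Vq f hf := by
  refine le_antisymm (Submodule.mul_le.2 ?_) ?_
  · rintro x hx y hy
    obtain ⟨v, rfl⟩ := (mem_Vq hf x).1 hx
    obtain ⟨w, rfl⟩ := (mem_Vq hf y).1 hy
    exact (mem_Vq hf _).2 ⟨v*w, map_mul f v w⟩
  · intro x hx
    simpa using Submodule.mul_mem_mul hx (one_mem_Vq hf)

include hRk in
lemma nonunit_mul_mem_R {m : V} (hm : ¬IsUnit m) (w : V) : m * w ∈ R := by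
  rw [hRk, map_mul, (res_zero_iff m).2 hm, zero_mul]
  exact zero_mem _

include hf hfi in
lemma tot [IsFractionRing ↥R Q] (q : Q) :
    (∃ v, f v = q) ∨ (q ≠ 0 ∧ ∃ w, ¬IsUnit w ∧ f w = q⁻¹) := by
  obtain ⟨⟨r, s⟩, hrs⟩ := IsLocalization.surj (nonZeroDivisors ↥R) q
  simp only [← hf] at hrs
  have hsV : ((s:↥R) : V) ≠ 0 := fun h => nonZeroDivisors.coe_ne_zero s (Subtype.ext h)
  have hfs : f ↑(s:↥R) ≠ 0 := fun h => hsV (hfi (by rw [h, map_zero]))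
  rcases eq_or_ne ((r:↥R):V) 0 with hr0 | hr0
  · left
    refine ⟨0, ?_⟩
    have h0 : q * f ↑(s:↥R) = 0 := by rw [hrs, hr0, map_zero]
    rcases mul_eq_zero.1 h0 with h | h
    · rw [map_zero]; exact h.symm
    · exact absurd h hfs
  have hfr : f ↑(r:↥R) ≠ 0 := fun h => hr0 (hfi (by rw [h, map_zero]))
  have hq : q = f ↑r / f ↑(s:↥R) := (eq_div_iff hfs).2 hrs
  obtain ⟨c, hc | hc⟩ := ValuationRing.cond ((r:↥R):V) ((s:↥R):V)
  · -- ↑r * c = ↑s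
    by_cases hcu : IsUnit c
    · obtain ⟨u, rfl⟩ := hcu
      left
      refine ⟨(↑u⁻¹ : Vˣ), ?_⟩
      have hfsu : f ↑(s:↥R) = f ↑r * f ↑u := by rw [← map_mul, hc]
      rw [hq, hfsu, eq_div_iff (by rw [← hfsu]; exact hfs)]
      rw [mul_comm (f ↑(r:↥R)) (f ↑u), ← mul_assoc, ← map_mul]
      simp
    · right
      have hfsu : f ↑(s:↥R) = f ↑r * f c := by rw [← map_mul, hc]
      have hfc : f c ≠ 0 := by
        intro h
        rw [hfsu, h, mul_zero] at hfs
        exact hfs rfl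
      have hq0 : q ≠ 0 := by rw [hq]; exact div_ne_zero hfr hfs
      refine ⟨hq0, c, hcu, ?_⟩
      rw [hq, hfsu]
      field_simp
  · -- ↑s * c = ↑r
    left
    refine ⟨c, ?_⟩
    have : f ↑(r:↥R) = f ↑(s:↥R) * f c := by rw [← map_mul, hc]
    rw [hq, this, mul_comm, mul_div_assoc, div_self hfs, mul_one]

end Setting

section Setting2
variable {V : Type*} [CommRing V] [IsDomain V] [ValuationRing V]
variable {k : Subfield (IsLocalRing.ResidueField V)} {R : Subring V}
variable {Q : Type*} [Field Q] [Algebra ↥R Q] [IsFractionRing ↥R Q]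
variable {f : V →+* Q}
variable (hf : ∀ r : ↥R, f ↑r = algebraMap ↥R Q r) (hfi : Function.Injective f)
variable (hRk : ∀ v : V, v ∈ R ↔ IsLocalRing.residue V v ∈ k)
variable {v₀ : V} (hv₀ : v₀ ∉ R)

include hRk in
lemma mem_R_of_mul_mem {r w : V} (hr : r ∈ R) (hrne : IsLocalRing.residue V r ≠ 0)
    (hrw : r * w ∈ R) : w ∈ R := by
  rw [hRk] at hr hrw ⊢
  rw [map_mul] at hrw
  have hww : IsLocalRing.residue V w
      = (IsLocalRing.residue V r)⁻¹ * (IsLocalRing.residue V r * IsLocalRing.residue V w) := by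
    rw [← mul_assoc, inv_mul_cancel₀ hrne, one_mul]
  rw [hww]
  exact Subfield.mul_mem _ (Subfield.inv_mem _ hr) hrw

include hf hfi hRk hv₀ in
lemma one_div_Mq : (1 : Submodule ↥R Q) / Mq f hf = Vq f hf := by
  refine le_antisymm ?_ ?_
  · intro z hz
    rcases tot hf hfi z with ⟨v, rfl⟩ | ⟨hz0, w, hw, hwz⟩
    · exact f_mem_Vq hf v
    · exfalso
      have hmem : f (w * v₀) ∈ Mq f hf := by
        rw [mem_Mq]
        exact ⟨w * v₀, fun h => hw (isUnit_of_mul_isUnit_left h), rfl⟩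
      have h1 : z * f (w * v₀) ∈ (1 : Submodule ↥R Q) := mem_div1.1 hz _ hmem
      rw [map_mul, hwz, ← mul_assoc, mul_inv_cancel₀ hz0, one_mul] at h1
      exact hv₀ ((f_mem_one hf hfi).1 h1)
  · intro x hx
    obtain ⟨v, rfl⟩ := (mem_Vq hf x).1 hx
    rw [mem_div1]
    rintro y hy
    obtain ⟨m, hm, rfl⟩ := (mem_Mq hf y).1 hy
    rw [← map_mul]
    exact (f_mem_one hf hfi).2 (by rw [mul_comm]; exact nonunit_mul_mem_R hRk hm v)

-- V-stable submodules are divisorial, hence t-closed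
include hf hfi hRk hv₀ in
lemma vS_eq_self_of_stable {S : Submodule ↥R Q} (hst : Vq f hf * S ≤ S) :
    vS ↥R Q S = S := by
  refine le_antisymm ?_ (le_vS_s14 S)
  intro z hz
  by_contra hzS
  have hz0 : z ≠ 0 := fun h => hzS (h ▸ zero_mem S)
  have key : ∀ x ∈ S, ∃ m, ¬IsUnit m ∧ x = z * f m := by
    intro x hx
    rcases eq_or_ne x 0 with rfl | hx0
    · exact ⟨0, not_isUnit_zero, by rw [map_zero, mul_zero]⟩
    rcases tot hf hfi (z * x⁻¹) with ⟨v, hv⟩ | ⟨hq0, w, hw, hwz⟩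
    · exfalso
      have : z = f v * x := by
        rw [hv]; field_simp
      exact hzS (this ▸ hst (mul_mem_mul (f_mem_Vq hf v) hx))
    · refine ⟨w, hw, ?_⟩
      rw [hwz, mul_inv, inv_inv]
      field_simp
  have hu : z⁻¹ * f v₀ ∈ (1 : Submodule ↥R Q) / S := by
    rw [mem_div1]
    intro x hx
    obtain ⟨m, hm, rfl⟩ := key x hx
    have : z⁻¹ * f v₀ * (z * f m) = f (v₀ * m) := by
      rw [map_mul]; field_simp
    rw [this]
    exact (f_mem_one hf hfi).2 (by rw [mul_comm]; exact nonunit_mul_mem_R hRk hm v₀)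
  have := mem_div1.1 hz _ hu
  rw [← mul_assoc, mul_inv_cancel₀ hz0, one_mul] at this
  exact hv₀ ((f_mem_one hf hfi).1 this)

include hf hfi hRk hv₀ in
lemma tS_eq_self_of_stable {S : Submodule ↥R Q} (hst : Vq f hf * S ≤ S) :
    tS ↥R Q S = S :=
  le_antisymm (le_trans (tS_le_vS S) (vS_eq_self_of_stable hf hfi hRk hv₀ hst).le) (le_tS_s14 S)

-- main computation
include hf hfi hRk hv₀ in
lemma tS_eq_Vq {T : Submodule ↥R Q} (hTV : T ≤ Vq f hf) (h1T : (1:Q) ∈ T)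
    {y : Q} (hyT : y ∈ T) (hy1 : y ∉ (1 : Submodule ↥R Q)) :
    tS ↥R Q T = Vq f hf := by
  obtain ⟨w, rfl⟩ := (mem_Vq hf y).1 (hTV hyT)
  have hwR : w ∉ R := fun h => hy1 ((f_mem_one hf hfi).2 h)
  refine le_antisymm ?_ ?_
  · refine tS_le fun J hJb hJfg hJle => ?_
    have h2 : Mq f hf ≤ (1:Submodule ↥R Q) / T := by
      intro x hx
      obtain ⟨m, hm, rfl⟩ := (mem_Mq hf x).1 hx
      rw [mem_div1]
      intro t ht
      obtain ⟨v, rfl⟩ := (mem_Vq hf t).1 (hTV ht)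
      rw [← map_mul]
      exact (f_mem_one hf hfi).2 (nonunit_mul_mem_R hRk hm v)
    calc vS ↥R Q J ≤ vS ↥R Q T := vS_mono hJle
      _ ≤ (1:Submodule ↥R Q) / Mq f hf := div1_antitone h2
      _ = Vq f hf := one_div_Mq hf hfi hRk hv₀
  · -- lower bound via the f.g. ideal (1, y)
    set J : Submodule ↥R Q := span ↥R {(1:Q), f w} with hJ
    have hJle : J ≤ T := by
      rw [hJ, Submodule.span_le]
      rintro x (rfl | rfl)
      exacts [h1T, hyT]
    have h1J : (1:Q) ∈ J := subset_span (by left; rfl)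
    have hyJ : f w ∈ J := subset_span (by right; rfl)
    have hdiv : (1:Submodule ↥R Q) / J = Mq f hf := by
      refine le_antisymm ?_ ?_
      · intro z hz
        rw [mem_div1] at hz
        have hz1 : z ∈ (1:Submodule ↥R Q) := by simpa using hz 1 h1J
        obtain ⟨r, hr⟩ := Submodule.mem_one.1 hz1
        have hzw : z * f w ∈ (1:Submodule ↥R Q) := hz _ hyJ
        rw [← hr, ← hf, ← map_mul] at hzw
        have hrw : ((r:V) * w) ∈ R := (f_mem_one hf hfi).1 hzw
        have hrM : ¬ IsUnit (r:V) := by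
          intro hru
          exact hwR (mem_R_of_mul_mem hRk r.2 (fun h => (res_zero_iff _).1 h hru) hrw)
        rw [← hr, ← hf]
        exact (mem_Mq hf _).2 ⟨_, hrM, rfl⟩
      · intro x hx
        obtain ⟨m, hm, rfl⟩ := (mem_Mq hf x).1 hx
        rw [mem_div1]
        intro t ht
        obtain ⟨v, rfl⟩ := (mem_Vq hf t).1 (hTV (hJle ht))
        rw [← map_mul]
        exact (f_mem_one hf hfi).2 (nonunit_mul_mem_R hRk hm v)
    have hvJ : vS ↥R Q J = Vq f hf := by
      rw [vS, hdiv, one_div_Mq hf hfi hRk hv₀]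
    rw [← hvJ]
    refine vS_le_tS_s14 ?_ ?_ hJle
    · intro h
      have : (1:Q) ∈ (⊥ : Submodule ↥R Q) := h ▸ h1J
      simpa using this
    · exact Submodule.fg_span (Set.toFinite _)

end Setting2

section Setting3
variable {V : Type*} [CommRing V] [IsDomain V] [ValuationRing V]
variable {k : Subfield (IsLocalRing.ResidueField V)} {R : Subring V}
variable {Q : Type*} [Field Q] [Algebra ↥R Q] [IsFractionRing ↥R Q]
variable {f : V →+* Q}
variable (hf : ∀ r : ↥R, f ↑r = algebraMap ↥R Q r) (hfi : Function.Injective f)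
variable (hRk : ∀ v : V, v ∈ R ↔ IsLocalRing.residue V v ∈ k)

-- `φ⁻¹(W)` as an `R`-submodule of `Q`
def Tof (W : Submodule ↥k (IsLocalRing.ResidueField V))
    (hf : ∀ r : ↥R, f ↑r = algebraMap ↥R Q r)
    (hRk : ∀ v : V, v ∈ R ↔ IsLocalRing.residue V v ∈ k) : Submodule ↥R Q :=
  fSub f hf {v | IsLocalRing.residue V v ∈ W}
    (by simp)
    (fun a ha b hb => by simp only [Set.mem_setOf_eq, map_add] at *; exact add_mem ha hb)
    (fun r a ha => by
      simp only [Set.mem_setOf_eq, map_mul] at *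
      have : IsLocalRing.residue V (r:V) * IsLocalRing.residue V a
          = (⟨IsLocalRing.residue V (r:V), (hRk _).1 r.2⟩ : ↥k) • IsLocalRing.residue V a := rfl
      rw [this]
      exact Submodule.smul_mem _ _ ha)

lemma mem_Tof {W : Submodule ↥k (IsLocalRing.ResidueField V)} {x : Q} :
    x ∈ Tof W hf hRk ↔ ∃ v, IsLocalRing.residue V v ∈ W ∧ f v = x := by
  simp [Tof, mem_fSub]

-- the subspace associated to a submodule between M and V
def Wof (T : Submodule ↥R Q) (hf : ∀ r : ↥R, f ↑r = algebraMap ↥R Q r)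
    (hRk : ∀ v : V, v ∈ R ↔ IsLocalRing.residue V v ∈ k)
    (hks : ∀ c : ↥k, ∃ r : ↥R, IsLocalRing.residue V ↑r = ↑c) :
    Submodule ↥k (IsLocalRing.ResidueField V) where
  carrier := {α | ∃ v, f v ∈ T ∧ IsLocalRing.residue V v = α}
  zero_mem' := ⟨0, by rw [map_zero]; exact zero_mem T, map_zero _⟩
  add_mem' := by
    rintro a b ⟨v, hv, rfl⟩ ⟨w, hw, rfl⟩
    exact ⟨v + w, by rw [map_add]; exact add_mem hv hw, map_add _ v w⟩
  smul_mem' := by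
    rintro c _ ⟨v, hv, rfl⟩
    obtain ⟨r, hr⟩ := hks c
    refine ⟨(r:V) * v, ?_, by rw [map_mul, hr]; rfl⟩
    rw [map_mul, hf]
    rw [← Algebra.smul_def]
    exact Submodule.smul_mem _ _ hv

lemma mem_Wof {hks : ∀ c : ↥k, ∃ r : ↥R, IsLocalRing.residue V ↑r = ↑c} {T : Submodule ↥R Q}
    {α : IsLocalRing.ResidueField V} :
    α ∈ Wof T hf hRk hks ↔ ∃ v, f v ∈ T ∧ IsLocalRing.residue V v = α := Iff.rfl

include hfi in
lemma Tof_Wof (hks : ∀ c : ↥k, ∃ r : ↥R, IsLocalRing.residue V ↑r = ↑c) {T : Submodule ↥R Q}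
    (hMT : Mq f hf ≤ T) (hTV : T ≤ Vq f hf) :
    Tof (Wof T hf hRk hks) hf hRk = T := by
  refine le_antisymm ?_ ?_
  · intro x hx
    obtain ⟨v, hv, rfl⟩ := (mem_Tof hf hRk).1 hx
    obtain ⟨v', hv'T, hφ⟩ := (mem_Wof hf hRk).1 hv
    have hd : ¬ IsUnit (v - v') := by
      rw [← res_zero_iff, map_sub, hφ, sub_self]
    have : f v = f v' + f (v - v') := by rw [← map_add]; ring_nf
    rw [this]
    exact add_mem hv'T (hMT ((mem_Mq hf _).2 ⟨v - v', hd, rfl⟩))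
  · intro x hx
    obtain ⟨v, rfl⟩ := (mem_Vq hf x).1 (hTV hx)
    exact (mem_Tof hf hRk).2 ⟨v, ⟨v, hx, rfl⟩, rfl⟩

lemma one_mem_Tof {W : Submodule ↥k (IsLocalRing.ResidueField V)}
    (h1 : (1 : IsLocalRing.ResidueField V) ∈ W) : (1:Q) ∈ Tof W hf hRk :=
  (mem_Tof hf hRk).2 ⟨1, by rw [map_one]; exact h1, map_one f⟩

lemma Tof_le_Vq {W : Submodule ↥k (IsLocalRing.ResidueField V)} :
    Tof W hf hRk ≤ Vq f hf := by
  intro x hx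
  obtain ⟨v, _, rfl⟩ := (mem_Tof hf hRk).1 hx
  exact f_mem_Vq hf v

lemma Mq_le_Tof {W : Submodule ↥k (IsLocalRing.ResidueField V)} :
    Mq f hf ≤ Tof W hf hRk := by
  intro x hx
  obtain ⟨m, hm, rfl⟩ := (mem_Mq hf x).1 hx
  exact (mem_Tof hf hRk).2 ⟨m, by rw [(res_zero_iff m).2 hm]; exact zero_mem W, rfl⟩

lemma Tof_mul {W W' : Submodule ↥k (IsLocalRing.ResidueField V)}
    (h1 : (1 : IsLocalRing.ResidueField V) ∈ W) (h1' : (1 : IsLocalRing.ResidueField V) ∈ W') :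
    Tof W hf hRk * Tof W' hf hRk = Tof (W * W') hf hRk := by
  refine le_antisymm (Submodule.mul_le.2 ?_) ?_
  · rintro x hx y hy
    obtain ⟨v, hv, rfl⟩ := (mem_Tof hf hRk).1 hx
    obtain ⟨w, hw, rfl⟩ := (mem_Tof hf hRk).1 hy
    exact (mem_Tof hf hRk).2 ⟨v * w,
      by rw [map_mul]; exact Submodule.mul_mem_mul hv hw, map_mul f v w⟩
  · intro x hx
    obtain ⟨v, hv, rfl⟩ := (mem_Tof hf hRk).1 hx
    have key : ∀ α, α ∈ W * W' → ∀ u : V, IsLocalRing.residue V u = α →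
        f u ∈ Tof W hf hRk * Tof W' hf hRk := by
      intro α hα
      refine Submodule.mul_induction_on hα ?_ ?_
      · intro β hβ γ hγ u hu
        obtain ⟨b, hb0⟩ := Ideal.Quotient.mk_surjective β
        obtain ⟨c, hc0⟩ := Ideal.Quotient.mk_surjective γ
        have hb : IsLocalRing.residue V b = β := hb0
        have hc : IsLocalRing.residue V c = γ := hc0
        have hbc : IsLocalRing.residue V (b * c) = β * γ := by
          rw [map_mul]
          exact congrArg₂ (· * ·) hb hc
        have hd : ¬ IsUnit (u - b * c) := by
          rw [← res_zero_iff, map_sub, hu, hbc, sub_self]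
        have hsplit : f u = f b * f c + f (u - b * c) := by
          rw [← map_mul, ← map_add]; ring_nf
        rw [hsplit]
        refine add_mem (Submodule.mul_mem_mul ?_ ?_) ?_
        · exact (mem_Tof hf hRk).2 ⟨b, by rw [hb]; exact hβ, rfl⟩
        · exact (mem_Tof hf hRk).2 ⟨c, by rw [hc]; exact hγ, rfl⟩
        · have : f (u - b*c) ∈ Mq f hf := (mem_Mq hf _).2 ⟨_, hd, rfl⟩
          have h2 : Mq f hf ≤ Tof W hf hRk * Tof W' hf hRk := by
            intro z hz
            obtain ⟨m, hm, rfl⟩ := (mem_Mq hf z).1 hz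
            have : f m = (1:Q) * f m := (one_mul _).symm
            rw [this]
            refine Submodule.mul_mem_mul (one_mem_Tof hf hRk h1) ?_
            exact (mem_Tof hf hRk).2 ⟨m, by rw [(res_zero_iff m).2 hm]; exact zero_mem W', rfl⟩
          exact h2 this
      · intro α β ihα ihβ u hu
        obtain ⟨a, ha0⟩ := Ideal.Quotient.mk_surjective α
        have ha : IsLocalRing.residue V a = α := ha0
        have h1a := ihα a ha
        have h2a := ihβ (u - a) (by rw [map_sub, hu, ha]; ring)
        have : f u = f a + f (u - a) := by rw [← map_add]; ring_nf
        rw [this]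
        exact add_mem h1a h2a
    exact key _ hv v rfl

lemma one_mem_pow {A B : Type*} [CommRing A] [CommRing B] [Algebra A B]
    {W : Submodule A B} (h1 : (1:B) ∈ W) (n : ℕ) : (1:B) ∈ W ^ n := by
  induction n with
  | zero => rw [pow_zero]; exact Submodule.one_le.1 le_rfl
  | succ n ih => rw [pow_succ]; simpa using Submodule.mul_mem_mul ih h1

lemma le_pow {A B : Type*} [CommRing A] [CommRing B] [Algebra A B]
    {W : Submodule A B} (h1 : (1:B) ∈ W) {n : ℕ} (hn : 1 ≤ n) : W ≤ W ^ n := by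
  induction n with
  | zero => omega
  | succ n ih =>
    rcases Nat.eq_or_lt_of_le hn with h | h
    · rw [← h, pow_one]
    · have hn' : 1 ≤ n := by omega
      rw [pow_succ]
      intro x hx
      simpa using Submodule.mul_mem_mul (ih hn' hx) h1

lemma Tof_pow {W : Submodule ↥k (IsLocalRing.ResidueField V)}
    (h1 : (1 : IsLocalRing.ResidueField V) ∈ W) {n : ℕ} (hn : 1 ≤ n) :
    (Tof W hf hRk) ^ n = Tof (W ^ n) hf hRk := by
  induction n with
  | zero => omega
  | succ n ih =>
    rcases Nat.eq_or_lt_of_le hn with h | h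
    · rw [← h]; simp
    · have hn' : 1 ≤ n := by omega
      have hmul := Tof_mul (W := W ^ n) (W' := W) hf hRk (one_mem_pow h1 n) h1
      rw [pow_succ, ih hn', hmul, pow_succ W n]

lemma pow_stab {W : Submodule ↥k (IsLocalRing.ResidueField V)}
    (h1 : (1 : IsLocalRing.ResidueField V) ∈ W) {n₀ : ℕ} (hn₀ : 0 < n₀)
    {F : Subfield (IsLocalRing.ResidueField V)}
    (hF : (↑(W ^ n₀) : Set (IsLocalRing.ResidueField V)) = ↑F)
    {m : ℕ} (hm : n₀ ≤ m) : W ^ m = W ^ n₀ := by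
  induction m with
  | zero => omega
  | succ m ih =>
    rcases Nat.eq_or_lt_of_le hm with h | h
    · rw [h]
    · have hm' : n₀ ≤ m := by omega
      rw [pow_succ, ih hm']
      refine le_antisymm (Submodule.mul_le.2 ?_) ?_
      · intro x hx y hy
        have hxF : x ∈ F := by rw [← SetLike.mem_coe, ← hF]; exact hx
        have hyF : y ∈ F := by
          rw [← SetLike.mem_coe, ← hF]
          exact le_pow h1 hn₀ hy
        have hxyF : x * y ∈ (↑(W ^ n₀) : Set (IsLocalRing.ResidueField V)) := by
          rw [hF]
          exact F.mul_mem hxF hyF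
        exact hxyF
      · intro x hx
        simpa using Submodule.mul_mem_mul hx h1

-- classification of nonzero ideals of R
include hRk in
lemma classify (I : Ideal ↥R) :
    (∀ x : ↥R, x ∈ I → ∀ v : V, ∃ y : ↥R, y ∈ I ∧ (y:V) = v * ↑x)
    ∨ (∃ a : ↥R, a ∈ I ∧ ∀ x : ↥R, x ∈ I → ∃ v : V, (↑x:V) = ↑a * v) := by
  by_cases h : ∃ a : ↥R, a ∈ I ∧ ∀ x : ↥R, x ∈ I → ∃ v : V, (↑x:V) = ↑a * v
  · exact Or.inr h
  · left
    intro x hx v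
    push_neg at h
    obtain ⟨x', hx'I, hxx'⟩ := h x hx
    obtain ⟨c, hc | hc⟩ := ValuationRing.cond ((x:↥R):V) ((x':↥R):V)
    · exact absurd hc.symm (hxx' c)
    · have hcu : ¬ IsUnit c := by
        intro hu
        obtain ⟨u, rfl⟩ := hu
        exact hxx' (↑u⁻¹ : Vˣ) (by rw [← hc, mul_assoc]; simp)
      have hcvR : c * v ∈ R := nonunit_mul_mem_R hRk hcu v
      refine ⟨x' * ⟨c * v, hcvR⟩, I.mul_mem_right _ hx'I, ?_⟩
      push_cast
      rw [← mul_assoc, hc]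
      ring

end Setting3

section Generic2
variable {R0 K0 : Type*} [CommRing R0] [Field K0] [Algebra R0 K0]

lemma mul_ne_bot' {S S' : Submodule R0 K0} (hS : S ≠ ⊥) (hS' : S' ≠ ⊥) : S * S' ≠ ⊥ := by
  obtain ⟨x, hx, hx0⟩ := Submodule.exists_mem_ne_zero_of_ne_bot hS
  obtain ⟨y, hy, hy0⟩ := Submodule.exists_mem_ne_zero_of_ne_bot hS'
  intro h
  have : x * y ∈ (⊥ : Submodule R0 K0) := h ▸ Submodule.mul_mem_mul hx hy
  rw [Submodule.mem_bot] at this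
  rcases mul_eq_zero.1 this with h' | h' <;> [exact hx0 h'; exact hy0 h']

lemma one_ne_bot' [Nontrivial R0] : (1 : Submodule R0 K0) ≠ ⊥ := by
  intro h
  have h1 : (1:K0) ∈ (1 : Submodule R0 K0) := Submodule.one_le.1 le_rfl
  rw [h, Submodule.mem_bot] at h1
  exact one_ne_zero h1

lemma pow_ne_bot' [Nontrivial R0] {S : Submodule R0 K0} (hS : S ≠ ⊥) (m : ℕ) : S ^ m ≠ ⊥ := by
  induction m with
  | zero => rw [pow_zero]; exact one_ne_bot'
  | succ m ih => rw [pow_succ]; exact mul_ne_bot' ih hS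

lemma span_pow' (d : K0) (m : ℕ) :
    (Submodule.span R0 {d}) ^ m = Submodule.span R0 {d ^ m} := by
  induction m with
  | zero => rw [pow_zero, pow_zero, Submodule.one_eq_span]
  | succ m ih => rw [pow_succ, ih, span_singleton_mul_span, pow_succ]

lemma idealToSub_mul' (P P' : Ideal R0) :
    idealToSub R0 K0 (P * P') = idealToSub R0 K0 P * idealToSub R0 K0 P' :=
  Submodule.map_mul P P' (Algebra.ofId R0 K0)

lemma idealToSub_pow' (P : Ideal R0) (m : ℕ) :
    idealToSub R0 K0 (P ^ m) = (idealToSub R0 K0 P) ^ m := by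
  induction m with
  | zero =>
    rw [pow_zero, pow_zero, Ideal.one_eq_top, idealToSub, Submodule.map_top,
      ← Submodule.one_eq_range]
  | succ m ih => rw [pow_succ, pow_succ, idealToSub_mul', ih]

lemma idealToSub_inj' (hinj : Function.Injective (algebraMap R0 K0)) {P P' : Ideal R0}
    (h : idealToSub R0 K0 P = idealToSub R0 K0 P') : P = P' :=
  Submodule.map_injective_of_injective (f := Algebra.linearMap R0 K0) hinj h

lemma idealToSub_ne_bot' (hinj : Function.Injective (algebraMap R0 K0)) {P : Ideal R0}
    (hP : P ≠ ⊥) : idealToSub R0 K0 P ≠ ⊥ := by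
  intro h
  exact hP (idealToSub_inj' hinj (by rw [h, idealToSub, Submodule.map_bot]))

end Generic2

section Setting4
variable {V : Type*} [CommRing V] [IsDomain V] [ValuationRing V]
variable {k : Subfield (IsLocalRing.ResidueField V)} {R : Subring V}
variable {Q : Type*} [Field Q] [Algebra ↥R Q] [IsFractionRing ↥R Q]
variable {f : V →+* Q}
variable (hf : ∀ r : ↥R, f ↑r = algebraMap ↥R Q r) (hfi : Function.Injective f)
variable (hRk : ∀ v : V, v ∈ R ↔ IsLocalRing.residue V v ∈ k)

include hf in
lemma stable_mul_right {S S' : Submodule ↥R Q} (hS : Vq f hf * S ≤ S) :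
    Vq f hf * (S * S') ≤ S * S' := by
  rw [← mul_assoc]
  exact mul_le_mul' hS le_rfl

include hf in
lemma stable_mul_left {S S' : Submodule ↥R Q} (hS' : Vq f hf * S' ≤ S') :
    Vq f hf * (S * S') ≤ S * S' := by
  rw [mul_left_comm]
  exact mul_le_mul' le_rfl hS'

include hf in
lemma stable_pow {S : Submodule ↥R Q} (hS : Vq f hf * S ≤ S) {m : ℕ} (hm : 1 ≤ m) :
    Vq f hf * S ^ m ≤ S ^ m := by
  induction m with
  | zero => omega
  | succ m ih =>
    rcases Nat.eq_or_lt_of_le hm with h | h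
    · rw [← h, pow_one]; exact hS
    · rw [pow_succ]
      exact stable_mul_right hf (ih (by omega))

include hf in
lemma sandwich {S T : Submodule ↥R Q} (hS : Vq f hf * S ≤ S) (h1T : (1:Q) ∈ T)
    (hTV : T ≤ Vq f hf) : T * S = S := by
  refine le_antisymm (le_trans (mul_le_mul' hTV le_rfl) hS) ?_
  intro x hx
  simpa using Submodule.mul_mem_mul h1T hx

include hf in
lemma absorb {T : Submodule ↥R Q} (h1T : (1:Q) ∈ T) (hTV : T ≤ Vq f hf) :
    T * Vq f hf = Vq f hf := by
  refine le_antisymm ?_ ?_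
  · refine le_trans (mul_le_mul' hTV le_rfl) ?_
    rw [Vq_mul_Vq hf]
  · intro x hx
    simpa using Submodule.mul_mem_mul h1T hx

include hf hRk in
lemma caseA {I : Ideal ↥R}
    (hst : ∀ x : ↥R, x ∈ I → ∀ v : V, ∃ y : ↥R, y ∈ I ∧ (y:V) = v * ↑x) :
    Vq f hf * idealToSub ↥R Q I ≤ idealToSub ↥R Q I := by
  refine Submodule.mul_le.2 ?_
  rintro x hx z hz
  obtain ⟨v, rfl⟩ := (mem_Vq hf x).1 hx
  obtain ⟨j, hjI, hjz⟩ := Submodule.mem_map.1 hz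
  obtain ⟨y', hy'I, hy'⟩ := hst j hjI v
  refine Submodule.mem_map.2 ⟨y', hy'I, ?_⟩
  have : f v * z = f ↑y' := by
    rw [← hjz]
    show f v * (algebraMap ↥R Q j) = f ↑y'
    rw [← hf, ← map_mul, ← hy']
  rw [show (Algebra.linearMap ↥R Q) y' = algebraMap ↥R Q y' from rfl, ← hf, ← this]

include hf hRk in
lemma caseB {I : Ideal ↥R} {a : ↥R} (haI : a ∈ I)
    (hdiv : ∀ x : ↥R, x ∈ I → ∃ v : V, (↑x:V) = ↑a * v) :
    ∃ T : Submodule ↥R Q,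
      idealToSub ↥R Q I = Submodule.span ↥R {algebraMap ↥R Q a} * T ∧
      Mq f hf ≤ T ∧ T ≤ Vq f hf ∧ (1:Q) ∈ T := by
  refine ⟨fSub f hf {v | ∃ x : ↥R, x ∈ I ∧ (↑x:V) = ↑a * v}
    ⟨0, I.zero_mem, by simp⟩
    (fun v hv w hw => by
      obtain ⟨x, hxI, hx⟩ := hv
      obtain ⟨x', hx'I, hx'⟩ := hw
      exact ⟨x + x', add_mem hxI hx'I, by push_cast; rw [hx, hx']; ring⟩)
    (fun r v hv => by
      obtain ⟨x, hxI, hx⟩ := hv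
      exact ⟨x * r, I.mul_mem_right r hxI, by push_cast; rw [hx]; ring⟩), ?_, ?_, ?_, ?_⟩
  · ext z
    constructor
    · intro hz
      obtain ⟨x, hxI, hxz⟩ := Submodule.mem_map.1 hz
      obtain ⟨v, hv⟩ := hdiv x hxI
      rw [Submodule.mem_span_singleton_mul]
      refine ⟨f v, ⟨v, ⟨x, hxI, hv⟩, rfl⟩, ?_⟩
      rw [← hxz]
      show algebraMap ↥R Q a * f v = algebraMap ↥R Q x
      rw [← hf, ← map_mul, ← hv, hf]
    · intro hz
      rw [Submodule.mem_span_singleton_mul] at hz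
      obtain ⟨t, ht, rfl⟩ := hz
      obtain ⟨v, ⟨x, hxI, hxv⟩, rfl⟩ := ht
      refine Submodule.mem_map.2 ⟨x, hxI, ?_⟩
      show algebraMap ↥R Q x = algebraMap ↥R Q a * f v
      have h1 : algebraMap ↥R Q a * f v = f ((a:V) * v) := by rw [map_mul, hf]
      rw [h1, ← hxv, hf]
  · intro z hz
    obtain ⟨m, hm, rfl⟩ := (mem_Mq hf z).1 hz
    exact ⟨m, ⟨a * ⟨m, nonunit_mem_R hRk hm⟩, I.mul_mem_right _ haI, by push_cast; ring⟩, rfl⟩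
  · rintro z ⟨v, _, rfl⟩
    exact f_mem_Vq hf v
  · exact ⟨1, ⟨a, haI, (mul_one _).symm⟩, map_one f⟩

include hf in
lemma Tof_mono {W W' : Submodule ↥k (IsLocalRing.ResidueField V)} (h : W ≤ W') :
    Tof W hf hRk ≤ Tof W' hf hRk := by
  intro x hx
  obtain ⟨v, hv, rfl⟩ := (mem_Tof hf hRk).1 hx
  exact (mem_Tof hf hRk).2 ⟨v, h hv, rfl⟩

end Setting4


/-- Let `R` be a pseudo-valuation domain issued from `(V, M, k)` with `K := V/M`, and
suppose every `k`-subspace `W` of `K` containing `k` has some power `W^n` which is a field.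
Then for all nonzero ideals `J ⊆ I` of `R`, `J` is a `t`-reduction of `I` iff `J` is a
reduction of `I`. -/
theorem pvd_t_reduction_iff_reduction (V : Type*) [CommRing V] [IsDomain V] [ValuationRing V]
    (k : Subfield (IsLocalRing.ResidueField V)) (hk : k ≠ ⊤)
    (R : Subring V) (hR : R = Subring.comap (IsLocalRing.residue V) k.toSubring)
    (Q : Type*) [Field Q] [Algebra ↥R Q] [IsFractionRing ↥R Q]
    (hfield : ∀ W : Submodule ↥k (IsLocalRing.ResidueField V),
      (↑k : Set (IsLocalRing.ResidueField V)) ⊆ (↑W : Set (IsLocalRing.ResidueField V)) →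
        ∃ n : ℕ, 0 < n ∧ ∃ F : Subfield (IsLocalRing.ResidueField V),
          (↑(W ^ n) : Set (IsLocalRing.ResidueField V)) = (↑F : Set (IsLocalRing.ResidueField V)))
    (J I : Ideal ↥R) (hJ0 : J ≠ 0) (hI0 : I ≠ 0) (hJI : J ≤ I) :
    (∃ n : ℕ, tI ↥R Q (J * I ^ n) = tI ↥R Q (I ^ (n + 1)))
      ↔ (∃ n : ℕ, J * I ^ n = I ^ (n + 1)) := by
  classical
  constructor
  swap
  · rintro ⟨n, h⟩
    exact ⟨n, by rw [h]⟩
  rintro ⟨n, hn⟩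
  have hRk : ∀ v : V, v ∈ R ↔ IsLocalRing.residue V v ∈ k := by
    intro v
    rw [hR]
    exact Iff.rfl
  obtain ⟨α₀, hα₀⟩ : ∃ α, α ∉ k := by
    by_contra hc
    push_neg at hc
    exact hk (Subfield.ext fun x => ⟨fun _ => trivial, fun _ => hc x⟩)
  obtain ⟨v₀, hv₀α⟩ := Ideal.Quotient.mk_surjective α₀
  have hv₀α' : IsLocalRing.residue V v₀ = α₀ := hv₀α
  have hv₀ : v₀ ∉ R := fun h => hα₀ (by rw [← hv₀α']; exact (hRk v₀).1 h)
  have hA : Function.Injective (algebraMap ↥R Q) := IsFractionRing.injective ↥R Q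
  have hAne : ∀ x : ↥R, (x:V) ≠ 0 → algebraMap ↥R Q x ≠ 0 := by
    intro x hx h
    exact hx (congrArg Subtype.val (hA (h.trans (map_zero _).symm)))
  -- trivial case : V is a field
  by_cases hM : ∀ m : V, ¬ IsUnit m → m = 0
  · have hunit : ∀ r : ↥R, r ≠ 0 → IsUnit r := by
      intro r hr
      have hrV : (r:V) ≠ 0 := fun h => hr (Subtype.ext h)
      have hrU : IsUnit (r:V) := by
        by_contra h
        exact hrV (hM _ h)
      obtain ⟨u, hu⟩ := hrU
      have huv : (r:V) * ((u⁻¹:Vˣ):V) = 1 := by rw [← hu]; simp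
      have hres : IsLocalRing.residue V (r:V) * IsLocalRing.residue V ((u⁻¹:Vˣ):V) = 1 := by
        rw [← map_mul, huv, map_one]
      have hwk : IsLocalRing.residue V ((u⁻¹:Vˣ):V) ∈ k := by
        rw [← inv_eq_of_mul_eq_one_right hres]
        exact Subfield.inv_mem k ((hRk _).1 r.2)
      refine IsUnit.of_mul_eq_one (a := r) ⟨_, (hRk _).2 hwk⟩ (Subtype.ext ?_)
      push_cast
      exact huv
    obtain ⟨x, hxI, hx0⟩ := Submodule.exists_mem_ne_zero_of_ne_bot hI0
    obtain ⟨y, hyJ, hy0⟩ := Submodule.exists_mem_ne_zero_of_ne_bot hJ0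
    have hIT : I = ⊤ := Ideal.eq_top_of_isUnit_mem I hxI (hunit x hx0)
    have hJT : J = ⊤ := Ideal.eq_top_of_isUnit_mem J hyJ (hunit y hy0)
    refine ⟨0, ?_⟩
    rw [hIT, hJT]
    simp
  push_neg at hM
  obtain ⟨m₀, hm₀u, hm₀⟩ := hM
  have hm₀R : m₀ ∈ R := nonunit_mem_R hRk hm₀u
  have hmv : ∀ v : V, m₀ * v ∈ R := fun v => nonunit_mul_mem_R hRk hm₀u v
  have hm₀Q : algebraMap ↥R Q ⟨m₀, hm₀R⟩ ≠ 0 := hAne _ hm₀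
  -- construct the embedding of V into Q
  obtain ⟨f, hfdef⟩ : ∃ f : V →+* Q, ∀ v : V,
      f v = algebraMap ↥R Q ⟨m₀ * v, hmv v⟩ * (algebraMap ↥R Q ⟨m₀, hm₀R⟩)⁻¹ := by
    refine ⟨⟨⟨⟨fun v => algebraMap ↥R Q ⟨m₀ * v, hmv v⟩ * (algebraMap ↥R Q ⟨m₀, hm₀R⟩)⁻¹,
      ?_⟩, ?_⟩, ?_, ?_⟩, fun v => rfl⟩
    · -- map_one
      show algebraMap ↥R Q ⟨m₀ * 1, hmv 1⟩ * _⁻¹ = 1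
      rw [mul_inv_eq_one₀ hm₀Q]
      congr 1
      exact Subtype.ext (mul_one m₀)
    · -- map_mul
      intro v w
      show algebraMap ↥R Q ⟨m₀ * (v * w), hmv _⟩ * _⁻¹
        = (algebraMap ↥R Q ⟨m₀ * v, hmv v⟩ * _⁻¹) * (algebraMap ↥R Q ⟨m₀ * w, hmv w⟩ * _⁻¹)
      have key : algebraMap ↥R Q ⟨m₀*(v*w), hmv _⟩ * algebraMap ↥R Q ⟨m₀, hm₀R⟩
          = algebraMap ↥R Q ⟨m₀*v, hmv v⟩ * algebraMap ↥R Q ⟨m₀*w, hmv w⟩ := by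
        rw [← map_mul, ← map_mul]
        congr 1
        refine Subtype.ext ?_
        push_cast
        ring
      rw [mul_mul_mul_comm, ← key, mul_assoc, ← mul_assoc (algebraMap ↥R Q ⟨m₀, hm₀R⟩),
        mul_inv_cancel₀ hm₀Q, one_mul]
    · -- map_zero
      show algebraMap ↥R Q ⟨m₀ * 0, hmv 0⟩ * _⁻¹ = 0
      have : (⟨m₀ * 0, hmv 0⟩ : ↥R) = 0 := Subtype.ext (mul_zero m₀)
      rw [this, map_zero, zero_mul]
    · -- map_add
      intro v w
      show algebraMap ↥R Q ⟨m₀ * (v + w), hmv _⟩ * _⁻¹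
        = algebraMap ↥R Q ⟨m₀ * v, hmv v⟩ * _⁻¹ + algebraMap ↥R Q ⟨m₀ * w, hmv w⟩ * _⁻¹
      rw [← add_mul]
      congr 1
      rw [← map_add]
      congr 1
      refine Subtype.ext ?_
      push_cast
      ring
  have hf : ∀ r : ↥R, f ↑r = algebraMap ↥R Q r := by
    intro r
    rw [hfdef, mul_inv_eq_iff_eq_mul₀ hm₀Q, ← map_mul]
    congr 1
    refine Subtype.ext ?_
    push_cast
    ring
  have hfi : Function.Injective f := by
    intro v w h
    rw [hfdef, hfdef] at h
    have h2 := mul_right_cancel₀ (inv_ne_zero hm₀Q) h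
    have h3 := congrArg Subtype.val (hA h2)
    exact mul_left_cancel₀ hm₀ h3
  have hks : ∀ c : ↥k, ∃ r : ↥R, IsLocalRing.residue V ↑r = ↑c := by
    intro c
    obtain ⟨v, hv⟩ := Ideal.Quotient.mk_surjective (c : IsLocalRing.ResidueField V)
    have hv' : IsLocalRing.residue V v = ↑c := hv
    exact ⟨⟨v, (hRk v).2 (by rw [hv']; exact c.2)⟩, hv'⟩
  -- move to submodules of Q
  simp only [tI, idealToSub_mul', idealToSub_pow'] at hn
  set 𝕁 := idealToSub ↥R Q J with h𝕁def
  set 𝕀 := idealToSub ↥R Q I with h𝕀def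
  have h𝕁b : 𝕁 ≠ ⊥ := idealToSub_ne_bot' hA hJ0
  have h𝕀b : 𝕀 ≠ ⊥ := idealToSub_ne_bot' hA hI0
  have h𝕁𝕀 : 𝕁 ≤ 𝕀 := Submodule.map_mono hJI
  have key : ∀ m : ℕ, 𝕁 * 𝕀 ^ m = 𝕀 ^ (m+1) → ∃ m : ℕ, J * I ^ m = I ^ (m+1) := by
    intro m hm
    exact ⟨m, idealToSub_inj' hA
      (by rw [idealToSub_mul', idealToSub_pow', idealToSub_pow']; exact hm)⟩
  have keyEq : 𝕁 = 𝕀 → ∃ m : ℕ, J * I ^ m = I ^ (m+1) := by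
    intro h
    exact key 0 (by rw [pow_zero, mul_one, pow_one]; exact h)
  rcases classify hRk I with hstI | ⟨aI, haI, hdivI⟩
  · -- Case A : I is an ideal of V
    have hstA : Vq f hf * 𝕀 ≤ 𝕀 := caseA hf hRk hstI
    rcases Nat.eq_zero_or_pos n with rfl | hn1
    · -- n = 0
      rw [pow_zero, mul_one, pow_one, tS_eq_self_of_stable hf hfi hRk hv₀ hstA] at hn
      rcases classify hRk J with hstJ | ⟨aJ, haJ, hdivJ⟩
      · rw [tS_eq_self_of_stable hf hfi hRk hv₀ (caseA hf hRk hstJ)] at hn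
        exact keyEq hn
      · have haJ0 : (aJ:V) ≠ 0 := by
          intro h0
          refine hJ0 (le_bot_iff.1 ?_)
          intro x hx
          obtain ⟨v, hv⟩ := hdivJ x hx
          rw [h0, zero_mul] at hv
          exact (Submodule.mem_bot _).2 (Subtype.ext hv)
        obtain ⟨T₀, hJeq, hMT₀, hT₀V, h1T₀⟩ := caseB hf hRk haJ hdivJ
        rw [← h𝕁def] at hJeq
        set b := algebraMap ↥R Q aJ with hbdef
        have hb0 : b ≠ 0 := hAne _ haJ0
        by_cases hT₀1 : ∀ y ∈ T₀, y ∈ (1 : Submodule ↥R Q)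
        · have hT₀ : T₀ = 1 := le_antisymm hT₀1 (Submodule.one_le.2 h1T₀)
          rw [hJeq, hT₀, mul_one, tS_span_singleton hb0] at hn
          exact keyEq (by rw [hJeq, hT₀, mul_one, hn])
        · push_neg at hT₀1
          obtain ⟨y₀, hy₀T₀, hy₀1⟩ := hT₀1
          rw [hJeq, tS_span_mul hb0, tS_eq_Vq hf hfi hRk hv₀ hT₀V h1T₀ hy₀T₀ hy₀1] at hn
          -- hn : span{b} * Vq = 𝕀 ; take m = 1
          refine key 1 ?_
          have h2 : 𝕁 * 𝕀 ^ 1 = Submodule.span ↥R {b * b} * Vq f hf := by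
            rw [pow_one, hJeq, ← hn, mul_mul_mul_comm, span_singleton_mul_span,
              absorb hf h1T₀ hT₀V]
          have h3 : 𝕀 ^ (1+1) = Submodule.span ↥R {b * b} * Vq f hf := by
            rw [← hn, pow_succ, pow_one, mul_mul_mul_comm, span_singleton_mul_span, Vq_mul_Vq hf]
          rw [h2, h3]
    · -- n ≥ 1
      have hst1 : Vq f hf * (𝕁 * 𝕀 ^ n) ≤ 𝕁 * 𝕀 ^ n :=
        stable_mul_left hf (stable_pow hf hstA hn1)
      have hst2 : Vq f hf * 𝕀 ^ (n+1) ≤ 𝕀 ^ (n+1) := stable_pow hf hstA (by omega)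
      rw [tS_eq_self_of_stable hf hfi hRk hv₀ hst1,
        tS_eq_self_of_stable hf hfi hRk hv₀ hst2] at hn
      exact key n hn
  · -- Case B : I = span{c} * T
    have haI0 : (aI:V) ≠ 0 := by
      intro h0
      refine hI0 (le_bot_iff.1 ?_)
      intro x hx
      obtain ⟨v, hv⟩ := hdivI x hx
      rw [h0, zero_mul] at hv
      exact (Submodule.mem_bot _).2 (Subtype.ext hv)
    obtain ⟨T, hIeq, hMT, hTV, h1T⟩ := caseB hf hRk haI hdivI
    rw [← h𝕀def] at hIeq
    set c := algebraMap ↥R Q aI with hcdef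
    have hc0 : c ≠ 0 := hAne _ haI0
    have hcn0 : ∀ m : ℕ, c ^ m ≠ 0 := fun m => pow_ne_zero m hc0
    have hVq1 : Vq f hf = (1 : Submodule ↥R Q) → False := by
      intro h
      exact hv₀ ((f_mem_one hf hfi).1 (h ▸ f_mem_Vq hf v₀))
    by_cases hTall : ∀ y ∈ T, y ∈ (1 : Submodule ↥R Q)
    · -- T = 1, I = span{c}
      have hT1 : T = 1 := le_antisymm hTall (Submodule.one_le.2 h1T)
      have h𝕀 : 𝕀 = Submodule.span ↥R {c} := by rw [hIeq, hT1, mul_one]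
      have h𝕀pow : ∀ m : ℕ, 𝕀 ^ m = Submodule.span ↥R {c ^ m} := by
        intro m
        rw [h𝕀, span_pow']
      rw [h𝕀pow, h𝕀pow, tS_span_singleton (hcn0 (n+1))] at hn
      rcases classify hRk J with hstJ | ⟨aJ, haJ, hdivJ⟩
      · have hstJ' : Vq f hf * 𝕁 ≤ 𝕁 := caseA hf hRk hstJ
        rw [tS_eq_self_of_stable hf hfi hRk hv₀ (stable_mul_right hf hstJ')] at hn
        have h𝕁 : 𝕁 = Submodule.span ↥R {c} := by
          refine span_eq_cancel (hcn0 n) ?_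
          rw [← mul_comm 𝕁 (Submodule.span ↥R {c ^ n}), hn, span_singleton_mul_span, ← pow_succ]
        exact keyEq (by rw [h𝕁, h𝕀])
      · have haJ0 : (aJ:V) ≠ 0 := by
          intro h0
          refine hJ0 (le_bot_iff.1 ?_)
          intro x hx
          obtain ⟨v, hv⟩ := hdivJ x hx
          rw [h0, zero_mul] at hv
          exact (Submodule.mem_bot _).2 (Subtype.ext hv)
        obtain ⟨T₀, hJeq, hMT₀, hT₀V, h1T₀⟩ := caseB hf hRk haJ hdivJ
        rw [← h𝕁def] at hJeq
        set b := algebraMap ↥R Q aJ with hbdef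
        have hb0 : b ≠ 0 := hAne _ haJ0
        by_cases hT₀1 : ∀ y ∈ T₀, y ∈ (1 : Submodule ↥R Q)
        · have hT₀ : T₀ = 1 := le_antisymm hT₀1 (Submodule.one_le.2 h1T₀)
          rw [hJeq, hT₀, mul_one, span_singleton_mul_span,
            tS_span_singleton (mul_ne_zero hb0 (hcn0 n))] at hn
          have h𝕁 : Submodule.span ↥R {b} = Submodule.span ↥R {c} := by
            refine span_eq_cancel (hcn0 n) ?_
            rw [span_singleton_mul_span, span_singleton_mul_span, mul_comm (c^n) b, ← pow_succ]
            exact hn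
          exact keyEq (by rw [hJeq, hT₀, mul_one, h𝕀, h𝕁])
        · push_neg at hT₀1
          obtain ⟨y₀, hy₀T₀, hy₀1⟩ := hT₀1
          exfalso
          rw [hJeq, mul_comm (Submodule.span ↥R {b}) T₀, mul_assoc, span_singleton_mul_span,
            mul_comm T₀ (Submodule.span ↥R {b * c ^ n}),
            tS_span_mul (mul_ne_zero hb0 (hcn0 n)),
            tS_eq_Vq hf hfi hRk hv₀ hT₀V h1T₀ hy₀T₀ hy₀1] at hn
          -- hn : span{b*c^n} * Vq = span{c^{n+1}}
          have h2 : Submodule.span ↥R {c^(n+1)} * Vq f hf = Submodule.span ↥R {c^(n+1)} := by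
            conv_lhs => rw [← hn]
            rw [mul_assoc, Vq_mul_Vq hf, hn]
          refine hVq1 ?_
          refine (span_eq_cancel (hcn0 (n+1)) ?_).symm
          rw [h2, mul_one]
    · push_neg at hTall
      obtain ⟨y, hyT, hy1⟩ := hTall
      have h𝕀pow : ∀ m : ℕ, 𝕀 ^ m = Submodule.span ↥R {c ^ m} * T ^ m := by
        intro m
        rw [hIeq, mul_pow, span_pow']
      have hTpowV : ∀ m : ℕ, T ^ m ≤ Vq f hf := by
        intro m
        induction m with
        | zero => rw [pow_zero]; exact one_le_Vq hf
        | succ m ih =>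
          rw [pow_succ]
          refine le_trans (mul_le_mul' ih hTV) ?_
          rw [Vq_mul_Vq hf]
      have hRHS : tS ↥R Q (𝕀 ^ (n+1)) = Submodule.span ↥R {c ^ (n+1)} * Vq f hf := by
        rw [h𝕀pow, tS_span_mul (hcn0 (n+1)),
          tS_eq_Vq hf hfi hRk hv₀ (hTpowV (n+1)) (one_mem_pow h1T (n+1))
            (le_pow h1T (by omega) hyT) hy1]
      rcases classify hRk J with hstJ | ⟨aJ, haJ, hdivJ⟩
      · -- J is an ideal of V
        have hstJ' : Vq f hf * 𝕁 ≤ 𝕁 := caseA hf hRk hstJ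
        have hcomp : 𝕁 * 𝕀 ^ n = Submodule.span ↥R {c ^ n} * 𝕁 := by
          rw [h𝕀pow, mul_comm (Submodule.span ↥R {c ^ n}) (T ^ n), ← mul_assoc,
            mul_comm 𝕁 (T^n), sandwich hf hstJ' (one_mem_pow h1T n) (hTpowV n),
            mul_comm 𝕁 (Submodule.span ↥R {c ^ n})]
        rw [hcomp, tS_eq_self_of_stable hf hfi hRk hv₀
          (stable_mul_left hf hstJ'), hRHS] at hn
        have h𝕁eq : 𝕁 = Submodule.span ↥R {c} * Vq f hf := by
          refine span_eq_cancel (hcn0 n) ?_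
          rw [hn, ← mul_assoc, span_singleton_mul_span, ← pow_succ]
        have hle1 : 𝕀 ≤ 𝕁 := by
          rw [hIeq, h𝕁eq]
          exact mul_le_mul' le_rfl hTV
        exact keyEq (le_antisymm h𝕁𝕀 hle1)
      · -- J = span{b} * T₀ : the main case
        have haJ0 : (aJ:V) ≠ 0 := by
          intro h0
          refine hJ0 (le_bot_iff.1 ?_)
          intro x hx
          obtain ⟨v, hv⟩ := hdivJ x hx
          rw [h0, zero_mul] at hv
          exact (Submodule.mem_bot _).2 (Subtype.ext hv)
        obtain ⟨T₀, hJeq, hMT₀, hT₀V, h1T₀⟩ := caseB hf hRk haJ hdivJ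
        rw [← h𝕁def] at hJeq
        set b := algebraMap ↥R Q aJ with hbdef
        have hb0 : b ≠ 0 := hAne _ haJ0
        have hLHS : 𝕁 * 𝕀 ^ n = Submodule.span ↥R {b * c ^ n} * (T₀ * T ^ n) := by
          rw [hJeq, h𝕀pow, mul_mul_mul_comm, span_singleton_mul_span]
        by_cases hsp : ∀ y' ∈ T₀ * T ^ n, y' ∈ (1 : Submodule ↥R Q)
        · -- degenerate : T₀ * T^n = 1, contradiction
          exfalso
          have h1p : (1:Q) ∈ T₀ * T ^ n := by
            simpa using Submodule.mul_mem_mul h1T₀ (one_mem_pow h1T n)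
          have hTT : T₀ * T ^ n = 1 := le_antisymm hsp (Submodule.one_le.2 h1p)
          rw [hLHS, hTT, mul_one, tS_span_singleton (mul_ne_zero hb0 (hcn0 n)), hRHS] at hn
          have h2 : Submodule.span ↥R {b * c^n} * Vq f hf = Submodule.span ↥R {b * c^n} := by
            conv_lhs => rw [hn]
            rw [mul_assoc, Vq_mul_Vq hf, ← hn]
          refine hVq1 ?_
          refine (span_eq_cancel (mul_ne_zero hb0 (hcn0 n)) ?_).symm
          rw [h2, mul_one]
        · push_neg at hsp
          obtain ⟨y', hy'TT, hy'1⟩ := hsp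
          have hTT0V : T₀ * T ^ n ≤ Vq f hf := by
            refine le_trans (mul_le_mul' hT₀V (hTpowV n)) ?_
            rw [Vq_mul_Vq hf]
          have h1TT : (1:Q) ∈ T₀ * T ^ n := by
            simpa using Submodule.mul_mem_mul h1T₀ (one_mem_pow h1T n)
          rw [hLHS, tS_span_mul (mul_ne_zero hb0 (hcn0 n)),
            tS_eq_Vq hf hfi hRk hv₀ hTT0V h1TT hy'TT hy'1, hRHS] at hn
          -- hn : span{b*c^n} * Vq = span{c^{n+1}} * Vq ; cancel c^n
          have hbcv : Submodule.span ↥R {b} * Vq f hf = Submodule.span ↥R {c} * Vq f hf := by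
            refine span_eq_cancel (hcn0 n) ?_
            rw [← mul_assoc, ← mul_assoc, span_singleton_mul_span, span_singleton_mul_span,
              mul_comm (c^n) b, ← pow_succ]
            exact hn
          set d := c⁻¹ * b with hddef
          have hd0 : d ≠ 0 := mul_ne_zero (inv_ne_zero hc0) hb0
          have hcd : c * d = b := by rw [hddef, ← mul_assoc, mul_inv_cancel₀ hc0, one_mul]
          have hdVq : Submodule.span ↥R {d} * Vq f hf = Vq f hf := by
            have h3 : Submodule.span ↥R {c⁻¹} * (Submodule.span ↥R {b} * Vq f hf)
                = Submodule.span ↥R {c⁻¹} * (Submodule.span ↥R {c} * Vq f hf) := by rw [hbcv]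
            rw [span_cancel hc0] at h3
            calc Submodule.span ↥R {d} * Vq f hf
                = Submodule.span ↥R {c⁻¹} * (Submodule.span ↥R {b} * Vq f hf) := by
                  rw [hddef, ← span_singleton_mul_span, mul_assoc]
              _ = Vq f hf := h3
          have hdmem : d ∈ Vq f hf := by
            have : d * 1 ∈ Submodule.span ↥R {d} * Vq f hf :=
              Submodule.mul_mem_mul (Submodule.mem_span_singleton_self d) (one_mem_Vq hf)
            rwa [mul_one, hdVq] at this
          obtain ⟨u, hu⟩ := (mem_Vq hf d).1 hdmem
          have hdinvmem : d⁻¹ ∈ Vq f hf := by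
            have h4 : Vq f hf = Submodule.span ↥R {d⁻¹} * Vq f hf := by
              conv_lhs => rw [← span_cancel hd0 (Vq f hf), hdVq]
            have : d⁻¹ * 1 ∈ Submodule.span ↥R {d⁻¹} * Vq f hf :=
              Submodule.mul_mem_mul (Submodule.mem_span_singleton_self d⁻¹) (one_mem_Vq hf)
            rwa [mul_one, ← h4] at this
          obtain ⟨u', hu'⟩ := (mem_Vq hf d⁻¹).1 hdinvmem
          have huu' : u * u' = 1 := by
            refine hfi ?_
            rw [map_mul, hu, hu', map_one, mul_inv_cancel₀ hd0]
          -- span{d} * T₀ ≤ T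
          have hdT₀ : Submodule.span ↥R {d} * T₀ ≤ T := by
            have h5 : 𝕁 ≤ Submodule.span ↥R {c} * T := by rw [← hIeq]; exact h𝕁𝕀
            rw [hJeq, ← hcd, ← span_singleton_mul_span, mul_assoc] at h5
            have h6 := mul_le_mul' (le_refl (Submodule.span ↥R {c⁻¹})) h5
            rwa [span_cancel hc0, span_cancel hc0] at h6
          have huT : f u ∈ T := by
            have : d * 1 ∈ Submodule.span ↥R {d} * T₀ :=
              Submodule.mul_mem_mul (Submodule.mem_span_singleton_self d) h1T₀
            rw [mul_one] at this
            rw [hu]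
            exact hdT₀ this
          -- the subspace machinery
          have hTW : Tof (Wof T hf hRk hks) hf hRk = T := Tof_Wof hf hfi hRk hks hMT hTV
          set W := Wof T hf hRk hks with hWdef
          have h1W : (1 : IsLocalRing.ResidueField V) ∈ W :=
            ⟨1, by rw [map_one]; exact h1T, map_one _⟩
          have hkW : (↑k : Set (IsLocalRing.ResidueField V)) ⊆ ↑W := by
            intro α hα
            obtain ⟨r, hr⟩ := hks ⟨α, hα⟩
            refine ⟨(r:V), ?_, hr⟩
            rw [hf]
            have : algebraMap ↥R Q r = r • (1:Q) := by
              rw [Algebra.smul_def, mul_one]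
            rw [this]
            exact T.smul_mem r h1T
          obtain ⟨n₀, hn₀pos, F, hF⟩ := hfield W hkW
          set TF := Tof (W ^ n₀) hf hRk with hTFdef
          have hTpowF : ∀ m : ℕ, 1 ≤ m → n₀ ≤ m → T ^ m = TF := by
            intro m h1m hm
            rw [← hTW, Tof_pow hf hRk h1W h1m, pow_stab h1W hn₀pos hF hm]
          have hTleTF : T ≤ TF := by
            rw [← hTpowF n₀ hn₀pos le_rfl]
            exact le_pow h1T hn₀pos
          have hTFTF : TF * TF ≤ TF := by
            rw [hTFdef]
            refine Submodule.mul_le.2 ?_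
            intro x hx y hy
            obtain ⟨v, hv, rfl⟩ := (mem_Tof hf hRk).1 hx
            obtain ⟨w, hw, rfl⟩ := (mem_Tof hf hRk).1 hy
            refine (mem_Tof hf hRk).2 ⟨v * w, ?_, map_mul f v w⟩
            have hvF : IsLocalRing.residue V v ∈ (↑F : Set (IsLocalRing.ResidueField V)) := by
              rw [← hF]; exact hv
            have hwF : IsLocalRing.residue V w ∈ (↑F : Set (IsLocalRing.ResidueField V)) := by
              rw [← hF]; exact hw
            have hmul : IsLocalRing.residue V (v * w)
                ∈ (↑(W ^ n₀) : Set (IsLocalRing.ResidueField V)) := by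
              rw [hF, map_mul]; exact F.mul_mem hvF hwF
            exact hmul
          have hφu : IsLocalRing.residue V u ∈ (↑F : Set (IsLocalRing.ResidueField V)) := by
            rw [← hF]
            have huW : IsLocalRing.residue V u ∈ W := by
              have : f u ∈ Tof W hf hRk := by rw [hTW]; exact huT
              obtain ⟨v', hv'W, hv'u⟩ := (mem_Tof hf hRk).1 this
              rw [← hfi hv'u]
              exact hv'W
            exact le_pow h1W hn₀pos huW
          have hres_uu' : IsLocalRing.residue V u * IsLocalRing.residue V u' = 1 := by
            rw [← map_mul, huu', map_one]
          have hφu' : IsLocalRing.residue V u' ∈ (↑F : Set (IsLocalRing.ResidueField V)) := by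
            rw [← inv_eq_of_mul_eq_one_right hres_uu']
            exact F.inv_mem hφu
          -- the key identity : span{d} * (T₀ * TF) = TF
          have hkey : Submodule.span ↥R {d} * (T₀ * TF) = TF := by
            refine le_antisymm ?_ ?_
            · have h7 : Submodule.span ↥R {d} * (T₀ * TF) = (Submodule.span ↥R {d} * T₀) * TF := by
                rw [mul_assoc]
              rw [h7]
              refine le_trans (mul_le_mul' (le_trans hdT₀ hTleTF) le_rfl) hTFTF
            · intro x hx
              obtain ⟨v, hvW, rfl⟩ := (mem_Tof hf hRk).1 hx
              have hφv : IsLocalRing.residue V v ∈ (↑F : Set (IsLocalRing.ResidueField V)) := by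
                rw [← hF]; exact hvW
              have hu'v : f (u' * v) ∈ TF := by
                refine (mem_Tof hf hRk).2 ⟨u' * v, ?_, rfl⟩
                have : IsLocalRing.residue V (u' * v) ∈ (↑F : Set (IsLocalRing.ResidueField V)) := by
                  rw [map_mul]
                  exact F.mul_mem hφu' hφv
                rw [← hF] at this
                exact this
              have hval : d * ((1:Q) * f (u' * v)) = f v := by
                rw [one_mul, ← hu, ← map_mul, ← mul_assoc, huu', one_mul]
              rw [← hval]
              exact Submodule.mul_mem_mul (Submodule.mem_span_singleton_self d)
                (Submodule.mul_mem_mul h1T₀ hu'v)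
          -- conclude : J * I^n₀ = I^(n₀+1)
          refine key n₀ ?_
          have hTn₀ : T ^ n₀ = TF := hTpowF n₀ hn₀pos le_rfl
          have hTn₀1 : T ^ (n₀+1) = TF := hTpowF (n₀+1) (by omega) (by omega)
          calc 𝕁 * 𝕀 ^ n₀ = (Submodule.span ↥R {b} * T₀) * (Submodule.span ↥R {c ^ n₀} * TF) := by
                rw [hJeq, h𝕀pow, hTn₀]
            _ = (Submodule.span ↥R {b} * Submodule.span ↥R {c ^ n₀}) * (T₀ * TF) := by
                rw [mul_mul_mul_comm]
            _ = Submodule.span ↥R {c ^ (n₀+1) * d} * (T₀ * TF) := by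
                rw [span_singleton_mul_span]
                congr 2
                rw [← hcd]
                ring
            _ = Submodule.span ↥R {c ^ (n₀+1)} * (Submodule.span ↥R {d} * (T₀ * TF)) := by
                rw [← span_singleton_mul_span, mul_assoc]
            _ = Submodule.span ↥R {c ^ (n₀+1)} * TF := by rw [hkey]
            _ = 𝕀 ^ (n₀+1) := by rw [h𝕀pow, hTn₀1]
end
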